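/- arXiv:2604.20367 — 10 statements merged into one kernel-verified Lean document; each statement's English description precedes it below -/
import Mathlib

section
/- For every positive integer n and all real numbers s and τ, the polynomial identity n·s^{n+2} − (n+2)·τ²·s^n + 2·τ^{n+2} = (τ−s)²·( Σ_{k=1}^{n} 2k·s^{k−1}·τ^{n−k+1} + n·s^n ) holds. -/
theorem stmt1 (n : ℕ) (hn : 0 < n) (s τ : ℝ) :
    (n : ℝ) * s ^ (n + 2) - ((n : ℝ) + 2) * τ ^ 2 * s ^ n + 2 * τ ^ (n + 2) =
      (τ - s) ^ 2 *
        ((∑ k ∈ Finset.Icc 1 n, 2 * (k : ℝ) * s ^ (k - 1) * τ ^ (n - k + 1))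
          + (n : ℝ) * s ^ n) := by
  induction n with
  | zero => exact absurd hn (lt_irrefl 0)
  | succ n ih =>
    rcases Nat.eq_zero_or_pos n with h0 | hpos
    · subst h0
      simp
      ring
    · have ih' := ih hpos
      rw [Finset.sum_Icc_succ_top (by omega : 1 ≤ n + 1)]
      have hs : ∑ k ∈ Finset.Icc 1 n, 2 * (k : ℝ) * s ^ (k - 1) * τ ^ (n + 1 - k + 1)
          = τ * ∑ k ∈ Finset.Icc 1 n, 2 * (k : ℝ) * s ^ (k - 1) * τ ^ (n - k + 1) := by
        rw [Finset.mul_sum]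
        refine Finset.sum_congr rfl fun k hk => ?_
        have hk' := (Finset.mem_Icc.mp hk).2
        have h2 : n + 1 - k + 1 = (n - k + 1) + 1 := by omega
        rw [h2, pow_succ]
        ring
      rw [hs]
      have h3 : n + 1 - 1 = n := by omega
      have h4 : n + 1 - (n + 1) + 1 = 1 := by omega
      rw [h3, h4]
      push_cast
      linear_combination τ * ih'
end

section
/- For every positive integer n, every real number a ≥ 0, and every real number τ, one has ∫_a^{a+1} (τ−s)²·( Σ_{k=1}^{n} 2k·s^{k−1}·τ^{n−k+1} + n·s^n ) ds = 2·τ^{n+2} + (n/(n+3))·S_{n+3} − ((n+2)/(n+1))·τ²·S_{n+1}, where S_j = (a+1)^j − a^j. -/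
lemma aux_pointwise (n : ℕ) (s τ : ℝ) :
    (τ - s) ^ 2 *
        ((∑ k ∈ Finset.Icc 1 n, 2 * (k : ℝ) * s ^ (k - 1) * τ ^ (n - k + 1))
          + (n : ℝ) * s ^ n) =
      2 * τ ^ (n + 2) + (n : ℝ) * s ^ (n + 2) - ((n : ℝ) + 2) * τ ^ 2 * s ^ n := by
  induction n with
  | zero => simp
  | succ n ih =>
    rw [Finset.sum_Icc_succ_top (by omega : 1 ≤ n + 1)]
    have hsum : (∑ k ∈ Finset.Icc 1 n, 2 * (k : ℝ) * s ^ (k - 1) * τ ^ (n + 1 - k + 1))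
        = τ * ∑ k ∈ Finset.Icc 1 n, 2 * (k : ℝ) * s ^ (k - 1) * τ ^ (n - k + 1) := by
      rw [Finset.mul_sum]
      refine Finset.sum_congr rfl fun k hk => ?_
      have hk' : k ≤ n := (Finset.mem_Icc.mp hk).2
      have : n + 1 - k + 1 = (n - k + 1) + 1 := by omega
      rw [this, pow_succ]
      ring
    rw [hsum]
    simp only [Nat.sub_self, Nat.add_sub_cancel]
    push_cast
    linear_combination τ * ih

theorem stmt2 (n : ℕ) (hn : 0 < n) (a : ℝ) (ha : 0 ≤ a) (τ : ℝ) :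
    ∫ s in a..(a + 1), (τ - s) ^ 2 *
        ((∑ k ∈ Finset.Icc 1 n, 2 * (k : ℝ) * s ^ (k - 1) * τ ^ (n - k + 1))
          + (n : ℝ) * s ^ n) =
      2 * τ ^ (n + 2)
        + ((n : ℝ) / ((n : ℝ) + 3)) * ((a + 1) ^ (n + 3) - a ^ (n + 3))
        - (((n : ℝ) + 2) / ((n : ℝ) + 1)) * τ ^ 2 * ((a + 1) ^ (n + 1) - a ^ (n + 1)) := by
  have h1 : ∀ s : ℝ, (τ - s) ^ 2 *
        ((∑ k ∈ Finset.Icc 1 n, 2 * (k : ℝ) * s ^ (k - 1) * τ ^ (n - k + 1))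
          + (n : ℝ) * s ^ n) =
      2 * τ ^ (n + 2) + (n : ℝ) * s ^ (n + 2) - ((n : ℝ) + 2) * τ ^ 2 * s ^ n :=
    fun s => aux_pointwise n s τ
  simp only [h1]
  have i1 : IntervalIntegrable (fun s : ℝ => 2 * τ ^ (n + 2) + (n : ℝ) * s ^ (n + 2))
      MeasureTheory.volume a (a + 1) := by
    apply Continuous.intervalIntegrable; continuity
  have i2 : IntervalIntegrable (fun s : ℝ => ((n : ℝ) + 2) * τ ^ 2 * s ^ n)
      MeasureTheory.volume a (a + 1) := by
    apply Continuous.intervalIntegrable; continuity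
  have i3 : IntervalIntegrable (fun s : ℝ => (2 : ℝ) * τ ^ (n + 2))
      MeasureTheory.volume a (a + 1) := by
    apply Continuous.intervalIntegrable; continuity
  have i4 : IntervalIntegrable (fun s : ℝ => (n : ℝ) * s ^ (n + 2))
      MeasureTheory.volume a (a + 1) := by
    apply Continuous.intervalIntegrable; continuity
  rw [intervalIntegral.integral_sub i1 i2, intervalIntegral.integral_add i3 i4,
    intervalIntegral.integral_const, intervalIntegral.integral_const_mul,
    intervalIntegral.integral_const_mul, integral_pow,
    integral_pow]
  have h3 : ((n : ℝ) + 3) ≠ 0 := by positivity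
  have h4 : ((n : ℝ) + 1) ≠ 0 := by positivity
  push_cast
  field_simp
  ring
end

section
/- Let n be a positive integer and let q : [0,∞) → [0,1] be a measurable function with ∫_0^∞ q(s) ds = 1 and ∫_0^∞ s^n q(s) ds < ∞. If a ≥ 0 is a real number such that ∫_0^∞ s^n q(s) ds = ∫_a^{a+1} s^n ds, then ∫_0^∞ s^{n+2} q(s) ds ≥ ∫_a^{a+1} s^{n+2} ds. -/
open MeasureTheory

theorem stmt4 (n : ℕ) (hn : 0 < n) (q : ℝ → ℝ) (hq_meas : Measurable q)
    (hq01 : ∀ s, 0 ≤ s → 0 ≤ q s ∧ q s ≤ 1)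
    (hq_total : ∫⁻ s in Set.Ioi (0:ℝ), ENNReal.ofReal (q s) = 1)
    (hfin : ∫⁻ s in Set.Ioi (0:ℝ), ENNReal.ofReal (s ^ n * q s) < ⊤)
    (a : ℝ) (ha : 0 ≤ a)
    (haq : ∫⁻ s in Set.Ioi (0:ℝ), ENNReal.ofReal (s ^ n * q s)
        = ENNReal.ofReal (∫ s in a..(a + 1), s ^ n)) :
    ∫⁻ s in Set.Ioi (0:ℝ), ENNReal.ofReal (s ^ (n + 2) * q s)
      ≥ ENNReal.ofReal (∫ s in a..(a + 1), s ^ (n + 2)) := by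
  obtain ⟨m, rfl⟩ : ∃ m, n = m + 1 := ⟨n - 1, (Nat.succ_pred_eq_of_pos hn).symm⟩
  set A : ℝ := a + 1 with hA_def
  have haA : a < A := by simp [hA_def]
  -- constants
  have hpowlt : a ^ (m+1) < A ^ (m+1) :=
    pow_lt_pow_left₀ haA ha (by omega)
  set c : ℝ := (A ^ (m+3) - a ^ (m+3)) / (A ^ (m+1) - a ^ (m+1)) with hc_def
  have hden : (0:ℝ) < A ^ (m+1) - a ^ (m+1) := by linarith
  have hnum : (0:ℝ) < A ^ (m+3) - a ^ (m+3) := by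
    have := pow_lt_pow_left₀ haA ha (show m+3 ≠ 0 by omega)
    linarith
  have hc_pos : 0 < c := div_pos hnum hden
  set d : ℝ := a ^ (m+3) - c * a ^ (m+1) with hd_def
  set f : ℝ → ℝ := fun s => s ^ (m+3) - c * s ^ (m+1) - d with hf_def
  have hfa : f a = 0 := by simp only [hf_def, hd_def]; ring
  have hfA : f A = 0 := by
    have hc : c * (A ^ (m+1) - a ^ (m+1)) = A ^ (m+3) - a ^ (m+3) := by
      rw [hc_def]; field_simp
    simp only [hf_def, hd_def]
    nlinarith [hc]
  have hf_cont : Continuous f := by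
    simp only [hf_def]; fun_prop
  -- derivative
  have hderiv : ∀ s : ℝ, HasDerivAt f ((m+3 : ℕ) * s ^ (m+2) - c * ((m+1 : ℕ) * s ^ m)) s := by
    intro s
    have h1 := hasDerivAt_pow (m+3) s
    have h2 := (hasDerivAt_pow (m+1) s).const_mul c
    simpa [hf_def] using (h1.sub h2).sub_const d
  set t : ℝ := Real.sqrt (c * (m+1) / (m+3)) with ht_def
  have harg : (0:ℝ) ≤ c * (m+1) / (m+3) := by positivity
  have ht_sq : t ^ 2 = c * (m+1) / (m+3) := Real.sq_sqrt harg
  have ht_nonneg : 0 ≤ t := Real.sqrt_nonneg _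
  have hanti : StrictAntiOn f (Set.Icc 0 t) := by
    apply strictAntiOn_of_deriv_neg (convex_Icc _ _) hf_cont.continuousOn
    intro x hx
    rw [interior_Icc] at hx
    rw [(hderiv x).deriv]
    have hx0 : 0 < x := hx.1
    have hxsq : x ^ 2 < c * (m+1) / (m+3) := by
      rw [← ht_sq]
      exact pow_lt_pow_left₀ hx.2 hx0.le (by norm_num)
    have h3 : (0:ℝ) < m + 3 := by positivity
    have : (m+3 : ℝ) * x ^ 2 < c * (m+1) := by
      rw [lt_div_iff₀ h3] at hxsq; nlinarith
    have hxm : 0 < x ^ m := pow_pos hx0 m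
    have hfac : (m+3 : ℕ) * x ^ (m+2) - c * ((m+1 : ℕ) * x ^ m)
        = x ^ m * ((m+3 : ℝ) * x ^ 2 - c * (m+1)) := by push_cast; ring
    rw [hfac]
    exact mul_neg_of_pos_of_neg hxm (by linarith)
  have hmono : StrictMonoOn f (Set.Ici t) := by
    apply strictMonoOn_of_deriv_pos (convex_Ici _) hf_cont.continuousOn
    intro x hx
    rw [interior_Ici] at hx
    rw [(hderiv x).deriv]
    have hx0 : 0 < x := lt_of_le_of_lt ht_nonneg hx
    have hxsq : c * (m+1) / (m+3) < x ^ 2 := by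
      rw [← ht_sq]
      exact pow_lt_pow_left₀ hx ht_nonneg (by norm_num)
    have h3 : (0:ℝ) < m + 3 := by positivity
    have : c * (m+1) < (m+3 : ℝ) * x ^ 2 := by
      rw [div_lt_iff₀ h3] at hxsq; nlinarith
    have hxm : 0 < x ^ m := pow_pos hx0 m
    have hfac : (m+3 : ℕ) * x ^ (m+2) - c * ((m+1 : ℕ) * x ^ m)
        = x ^ m * ((m+3 : ℝ) * x ^ 2 - c * (m+1)) := by push_cast; ring
    rw [hfac]
    exact mul_pos hxm (by linarith)
  -- a ≤ t ≤ A
  have hat : a ≤ t := by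
    by_contra h
    push_neg at h
    have := hmono (Set.mem_Ici.mpr h.le) (Set.mem_Ici.mpr (by linarith : t ≤ A)) haA
    rw [hfa, hfA] at this; exact lt_irrefl 0 this
  have htA : t ≤ A := by
    by_contra h
    push_neg at h
    have := hanti (Set.mem_Icc.mpr ⟨ha, by linarith⟩) (Set.mem_Icc.mpr ⟨by linarith, h.le⟩) haA
    rw [hfa, hfA] at this; exact lt_irrefl 0 this
  -- sign lemmas
  have hf_nonpos : ∀ s ∈ Set.Icc a A, f s ≤ 0 := by
    intro s hs
    rcases le_or_gt s t with h | h
    · have := hanti.antitoneOn (Set.mem_Icc.mpr ⟨ha, hat⟩)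
        (Set.mem_Icc.mpr ⟨le_trans ha hs.1, h⟩) hs.1
      rw [hfa] at this; exact this
    · have := hmono.monotoneOn (Set.mem_Ici.mpr h.le) (Set.mem_Ici.mpr htA) hs.2
      rw [hfA] at this; exact this
  have hf_nonneg : ∀ s : ℝ, 0 ≤ s → s ∉ Set.Ioc a A → 0 ≤ f s := by
    intro s hs0 hs
    rw [Set.mem_Ioc, not_and_or, not_lt, not_le] at hs
    rcases hs with h | h
    · have := hanti.antitoneOn (Set.mem_Icc.mpr ⟨hs0, le_trans h hat⟩)
        (Set.mem_Icc.mpr ⟨ha, hat⟩) h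
      rw [hfa] at this; exact this
    · have := hmono.monotoneOn (Set.mem_Ici.mpr htA) (Set.mem_Ici.mpr (le_trans htA h.le)) h.le
      rw [hfA] at this; exact this
  -- measure
  set μ : Measure ℝ := volume.restrict (Set.Ioi (0:ℝ)) with hμ_def
  have hq_nn : 0 ≤ᵐ[μ] q :=
    (ae_restrict_iff' measurableSet_Ioi).mpr (ae_of_all _ fun s hs => (hq01 s (le_of_lt hs)).1)
  have hq_int : Integrable q μ := by
    refine ⟨hq_meas.aestronglyMeasurable, ?_⟩
    rw [hasFiniteIntegral_iff_ofReal hq_nn, hq_total]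
    exact ENNReal.one_lt_top
  have hI0 : ∫ s, q s ∂μ = 1 := by
    have := ofReal_integral_eq_lintegral_ofReal hq_int hq_nn
    rw [hq_total] at this
    have h0 : 0 ≤ ∫ s, q s ∂μ := integral_nonneg_of_ae hq_nn
    rw [← ENNReal.ofReal_one] at this
    exact (ENNReal.ofReal_eq_ofReal_iff h0 (by norm_num)).mp this
  -- gn
  have hgn_nn : 0 ≤ᵐ[μ] fun s => s ^ (m+1) * q s :=
    (ae_restrict_iff' measurableSet_Ioi).mpr (ae_of_all _ fun s hs =>
      mul_nonneg (pow_nonneg (le_of_lt hs) _) (hq01 s (le_of_lt hs)).1)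
  have hgn_meas : Measurable fun s : ℝ => s ^ (m+1) * q s :=
    (measurable_id.pow_const _).mul hq_meas
  have hgn_int : Integrable (fun s => s ^ (m+1) * q s) μ := by
    refine ⟨hgn_meas.aestronglyMeasurable, ?_⟩
    rw [hasFiniteIntegral_iff_ofReal hgn_nn]
    exact hfin
  set Mn : ℝ := ∫ s in a..A, s ^ (m+1) with hMn_def
  have hMn_nn : 0 ≤ Mn := intervalIntegral.integral_nonneg haA.le
    (fun s hs => pow_nonneg (le_trans ha hs.1) _)
  have hIn : ∫ s, s ^ (m+1) * q s ∂μ = Mn := by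
    have h1 := ofReal_integral_eq_lintegral_ofReal hgn_int hgn_nn
    rw [haq] at h1
    have h0 : 0 ≤ ∫ s, s ^ (m+1) * q s ∂μ := integral_nonneg_of_ae hgn_nn
    exact (ENNReal.ofReal_eq_ofReal_iff h0 hMn_nn).mp h1
  -- case on finiteness
  rcases eq_top_or_lt_top (∫⁻ s in Set.Ioi (0:ℝ), ENNReal.ofReal (s ^ (m+1+2) * q s)) with htop | hfin2
  · rw [ge_iff_le, htop]; exact le_top
  have hg2_nn : 0 ≤ᵐ[μ] fun s => s ^ (m+3) * q s :=
    (ae_restrict_iff' measurableSet_Ioi).mpr (ae_of_all _ fun s hs =>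
      mul_nonneg (pow_nonneg (le_of_lt hs) _) (hq01 s (le_of_lt hs)).1)
  have hg2_meas : Measurable fun s : ℝ => s ^ (m+3) * q s :=
    (measurable_id.pow_const _).mul hq_meas
  have hm13 : m + 1 + 2 = m + 3 := by ring
  rw [hm13] at hfin2 ⊢
  have hg2_int : Integrable (fun s => s ^ (m+3) * q s) μ := by
    refine ⟨hg2_meas.aestronglyMeasurable, ?_⟩
    rw [hasFiniteIntegral_iff_ofReal hg2_nn]
    exact hfin2
  set I : ℝ := ∫ s, s ^ (m+3) * q s ∂μ with hI_def
  have hI_nn : 0 ≤ I := integral_nonneg_of_ae hg2_nn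
  rw [ge_iff_le, ← ofReal_integral_eq_lintegral_ofReal hg2_int hg2_nn]
  set M : ℝ := ∫ s in a..A, s ^ (m+3) with hM_def
  apply ENNReal.ofReal_le_ofReal
  -- main comparison
  have hfq_eq : (fun s => f s * q s)
      = fun s => (s ^ (m+3) * q s - c * (s ^ (m+1) * q s)) - d * q s := by
    funext s; simp only [hf_def]; ring
  have hfq_int : Integrable (fun s => f s * q s) μ := by
    rw [hfq_eq]
    exact (hg2_int.sub (hgn_int.const_mul c)).sub (hq_int.const_mul d)
  have hIoc_sub : Set.Ioc a A ⊆ Set.Ioi (0:ℝ) := fun x hx => lt_of_le_of_lt ha hx.1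
  have hfIoc_int : IntegrableOn f (Set.Ioc a A) volume :=
    hf_cont.integrableOn_Ioc
  have hind_int : Integrable ((Set.Ioc a A).indicator f) μ := by
    rw [integrable_indicator_iff measurableSet_Ioc]
    rw [IntegrableOn, hμ_def, Measure.restrict_restrict measurableSet_Ioc,
      Set.inter_eq_left.mpr hIoc_sub]
    exact hfIoc_int
  have hmono_ae : (Set.Ioc a A).indicator f ≤ᵐ[μ] fun s => f s * q s := by
    rw [hμ_def]
    refine (ae_restrict_iff' measurableSet_Ioi).mpr (ae_of_all _ fun s hs => ?_)
    show (Set.Ioc a A).indicator f s ≤ f s * q s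
    by_cases hsm : s ∈ Set.Ioc a A
    · rw [Set.indicator_of_mem hsm]
      have h1 : f s ≤ 0 := hf_nonpos s ⟨hsm.1.le, hsm.2⟩
      have h2 := (hq01 s (le_of_lt hs)).2
      nlinarith [mul_nonneg (neg_nonneg.mpr h1) (sub_nonneg.mpr h2)]
    · rw [Set.indicator_of_notMem hsm]
      exact mul_nonneg (hf_nonneg s (le_of_lt hs) hsm) (hq01 s (le_of_lt hs)).1
  have hkey : ∫ s, (Set.Ioc a A).indicator f s ∂μ ≤ ∫ s, f s * q s ∂μ :=
    integral_mono_ae hind_int hfq_int hmono_ae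
  -- compute both sides
  have hint1 : IntervalIntegrable (fun s : ℝ => s ^ (m+3)) volume a A :=
    (continuous_pow _).intervalIntegrable a A
  have hint2 : IntervalIntegrable (fun s : ℝ => c * s ^ (m+1)) volume a A :=
    (continuous_const.mul (continuous_pow _)).intervalIntegrable a A
  have hint3 : IntervalIntegrable (fun _ : ℝ => d) volume a A :=
    intervalIntegrable_const
  have hlhs : ∫ s, (Set.Ioc a A).indicator f s ∂μ = M - c * Mn - d := by
    rw [integral_indicator measurableSet_Ioc, hμ_def,
      Measure.restrict_restrict measurableSet_Ioc, Set.inter_eq_left.mpr hIoc_sub,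
      ← intervalIntegral.integral_of_le haA.le]
    have : ∫ s in a..A, f s = (∫ s in a..A, s ^ (m+3)) - (∫ s in a..A, c * s ^ (m+1))
        - ∫ _ in a..A, d := by
      rw [← intervalIntegral.integral_sub hint1 hint2,
        ← intervalIntegral.integral_sub (hint1.sub hint2) hint3]
    rw [this, intervalIntegral.integral_const_mul, intervalIntegral.integral_const]
    simp only [hM_def, hMn_def, hA_def, smul_eq_mul]
    ring
  have Hc : Integrable (fun s => c * (s ^ (m+1) * q s)) μ := hgn_int.const_mul c
  have Hd : Integrable (fun s => d * q s) μ := hq_int.const_mul d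
  have H1 : Integrable (fun s => s ^ (m+3) * q s - c * (s ^ (m+1) * q s)) μ := hg2_int.sub Hc
  have hrhs : ∫ s, f s * q s ∂μ = I - c * Mn - d := by
    rw [hfq_eq, integral_sub H1 Hd, integral_sub hg2_int Hc,
      MeasureTheory.integral_const_mul, MeasureTheory.integral_const_mul, hIn, hI0, hI_def]
    ring
  rw [hlhs, hrhs] at hkey
  linarith
end

section
/- Let n be a positive integer and let q : [0,∞) → [0,1] be a measurable function with ∫_0^∞ q(s) ds = 1 and ∫_0^∞ s^n q(s) ds < ∞. Then there exists a real number a ≥ 0 such that ∫_a^{a+1} s^n ds = ∫_0^∞ s^n q(s) ds, i.e. ((a+1)^{n+1} − a^{n+1})/(n+1) = ∫_0^∞ s^n q(s) ds. -/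
open MeasureTheory

theorem stmt5 (n : ℕ) (hn : 0 < n) (q : ℝ → ℝ) (hq_meas : Measurable q)
    (hq01 : ∀ s, 0 ≤ s → 0 ≤ q s ∧ q s ≤ 1)
    (hq_int : IntegrableOn q (Set.Ioi 0))
    (hq_total : ∫ s in Set.Ioi (0:ℝ), q s = 1)
    (hsn_int : IntegrableOn (fun s => s ^ n * q s) (Set.Ioi 0)) :
    ∃ a : ℝ, 0 ≤ a ∧
      ((a + 1) ^ (n + 1) - a ^ (n + 1)) / ((n : ℝ) + 1)
        = ∫ s in Set.Ioi (0:ℝ), s ^ n * q s := by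
  set V : ℝ := ∫ s in Set.Ioi (0:ℝ), s ^ n * q s with hV
  have hnp : (0:ℝ) < (n:ℝ) + 1 := by positivity
  have hsub : Set.Ioc (0:ℝ) 1 ⊆ Set.Ioi 0 := Set.Ioc_subset_Ioi_self
  have hsub2 : Set.Ioi (1:ℝ) ⊆ Set.Ioi 0 := Set.Ioi_subset_Ioi (by norm_num)
  have hdisj : Disjoint (Set.Ioc (0:ℝ) 1) (Set.Ioi 1) := Set.Ioc_disjoint_Ioi le_rfl
  have hunion : Set.Ioc (0:ℝ) 1 ∪ Set.Ioi 1 = Set.Ioi 0 :=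
    Set.Ioc_union_Ioi_eq_Ioi (by norm_num)
  -- integrabilities
  have hq1 : IntegrableOn q (Set.Ioc 0 1) := hq_int.mono_set hsub
  have hq2 : IntegrableOn q (Set.Ioi 1) := hq_int.mono_set hsub2
  have hsn1 : IntegrableOn (fun s => s ^ n * q s) (Set.Ioc 0 1) := hsn_int.mono_set hsub
  have hsn2 : IntegrableOn (fun s => s ^ n * q s) (Set.Ioi 1) := hsn_int.mono_set hsub2
  have hpow1 : IntegrableOn (fun s : ℝ => s ^ n) (Set.Ioc 0 1) :=
    (continuous_pow n).integrableOn_Ioc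
  -- split of ∫ q
  have hc : IntegrableOn (fun _ : ℝ => (1:ℝ)) (Set.Ioc 0 1) :=
    integrableOn_const measure_Ioc_lt_top.ne
  have hqm1 : IntegrableOn (fun s => q s - 1) (Set.Ioc (0:ℝ) 1) := hq1.sub hc
  have hqsplit : (∫ s in Set.Ioc (0:ℝ) 1, q s) + ∫ s in Set.Ioi (1:ℝ), q s = 1 := by
    have h := setIntegral_union (f := q) (μ := volume) hdisj measurableSet_Ioi hq1 hq2
    rw [hunion] at h
    linarith [hq_total]
  -- split of V
  have hVsplit : V = (∫ s in Set.Ioc (0:ℝ) 1, s ^ n * q s)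
      + ∫ s in Set.Ioi (1:ℝ), s ^ n * q s := by
    rw [hV, ← hunion, setIntegral_union hdisj measurableSet_Ioi hsn1 hsn2]
  -- lower bound on the first piece
  have hA : (∫ s in Set.Ioc (0:ℝ) 1, (q s - 1 + s ^ n))
      ≤ ∫ s in Set.Ioc (0:ℝ) 1, s ^ n * q s := by
    apply setIntegral_mono_on
    · exact hqm1.add hpow1
    · exact hsn1
    · exact measurableSet_Ioc
    · intro s hs
      obtain ⟨hs0, hs1⟩ := hs
      obtain ⟨hq0, hqle⟩ := hq01 s hs0.le
      have hsn_le : s ^ n ≤ 1 := pow_le_one₀ hs0.le hs1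
      have hsn_nn : 0 ≤ s ^ n := by positivity
      nlinarith [mul_le_one₀ hsn_le hq0 hqle]
  have hAval : (∫ s in Set.Ioc (0:ℝ) 1, (q s - 1 + s ^ n))
      = (∫ s in Set.Ioc (0:ℝ) 1, q s) - 1 + 1 / ((n:ℝ) + 1) := by
    rw [integral_add hqm1 hpow1, integral_sub hq1 hc]
    have h1 : (∫ _ in Set.Ioc (0:ℝ) 1, (1:ℝ)) = 1 := by simp
    have h2 : (∫ s in Set.Ioc (0:ℝ) 1, s ^ n) = 1 / ((n:ℝ) + 1) := by
      rw [← intervalIntegral.integral_of_le (by norm_num : (0:ℝ) ≤ 1)]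
      simp [integral_pow]
    rw [h1, h2]
  -- lower bound on the second piece
  have hB : (∫ s in Set.Ioi (1:ℝ), q s) ≤ ∫ s in Set.Ioi (1:ℝ), s ^ n * q s := by
    apply setIntegral_mono_on hq2 hsn2 measurableSet_Ioi
    intro s hs
    have hs1 : (1:ℝ) ≤ s := le_of_lt hs
    obtain ⟨hq0, _⟩ := hq01 s (by linarith)
    nlinarith [one_le_pow₀ hs1 (n := n)]
  -- V ≥ 1/(n+1)
  have hVlb : 1 / ((n:ℝ) + 1) ≤ V := by
    rw [hVsplit]
    have := hA
    rw [hAval] at this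
    linarith
  have hVpos : 0 < V := lt_of_lt_of_le (by positivity) hVlb
  -- IVT
  set f : ℝ → ℝ := fun a => ((a + 1) ^ (n + 1) - a ^ (n + 1)) / ((n:ℝ) + 1) with hf
  have hcont : ContinuousOn f (Set.Icc 0 (((n:ℝ) + 1) * V)) := by
    apply Continuous.continuousOn
    fun_prop
  have hf0 : f 0 = 1 / ((n:ℝ) + 1) := by
    simp [hf]
  set M : ℝ := ((n:ℝ) + 1) * V with hM
  have hM0 : 0 ≤ M := by positivity
  have hfM : V ≤ f M := by
    have h1 : M ^ (n + 1) ≤ M * (M + 1) ^ n := by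
      rw [pow_succ']
      exact mul_le_mul_of_nonneg_left (pow_le_pow_left₀ hM0 (by linarith) n) hM0
    have h2 : (M + 1) ≤ (M + 1) ^ n := le_self_pow₀ (by linarith) hn.ne'
    have h3 : (M + 1) ^ (n + 1) = (M + 1) * (M + 1) ^ n := pow_succ' _ _
    show V ≤ ((M + 1) ^ (n + 1) - M ^ (n + 1)) / ((n:ℝ) + 1)
    rw [le_div_iff₀ hnp]
    nlinarith [h1, h2, h3]
  obtain ⟨a, ha, hfa⟩ := intermediate_value_Icc hM0 hcont ⟨by rw [hf0]; exact hVlb, hfM⟩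
  exact ⟨a, ha.1, hfa⟩
end

section
/- Let a ≥ 0 be a real number and let τ be a real number with 0 < τ < a + 1. Then ∫_a^{a+1} s (s−τ)² ds > (τ/5) · ∫_a^{a+1} (s−τ)² ds; that is, the weighted average of s over [a, a+1] with weight (s−τ)² is strictly greater than τ/5. -/
set_option maxHeartbeats 1000000 in
theorem stmt9 (a : ℝ) (ha : 0 ≤ a) (τ : ℝ) (hτ : 0 < τ) (hτa : τ < a + 1) :
    (∫ s in a..(a + 1), s * (s - τ) ^ 2) >
      (τ / 5) * ∫ s in a..(a + 1), (s - τ) ^ 2 := by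
  have h1 : (∫ s in a..(a + 1), s * (s - τ) ^ 2)
      = ((a+1)^4 - a^4)/4 - 2*τ*(((a+1)^3 - a^3)/3) + τ^2*(((a+1)^2 - a^2)/2) := by
    have : (∫ s in a..(a + 1), s * (s - τ) ^ 2)
        = ∫ s in a..(a + 1), (s^3 - (2*τ)*s^2 + (τ^2)*s) := by
      congr 1; ext s; ring
    rw [this]
    have i3 : IntervalIntegrable (fun s : ℝ => s^3) MeasureTheory.volume a (a+1) :=
      (continuous_pow 3).intervalIntegrable _ _
    have i2 : IntervalIntegrable (fun s : ℝ => (2*τ)*s^2) MeasureTheory.volume a (a+1) :=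
      (continuous_const.mul (continuous_pow 2)).intervalIntegrable _ _
    have i1 : IntervalIntegrable (fun s : ℝ => (τ^2)*s) MeasureTheory.volume a (a+1) :=
      (continuous_const.mul continuous_id).intervalIntegrable _ _
    rw [intervalIntegral.integral_add (i3.sub i2) i1, intervalIntegral.integral_sub i3 i2,
      intervalIntegral.integral_const_mul, intervalIntegral.integral_const_mul,
      integral_id, integral_pow, integral_pow]
    ring
  have h2 : (∫ s in a..(a + 1), (s - τ) ^ 2)
      = ((a+1)^3 - a^3)/3 - τ*((a+1)^2 - a^2) + τ^2 := by
    have : (∫ s in a..(a + 1), (s - τ) ^ 2)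
        = ∫ s in a..(a + 1), (s^2 - (2*τ)*s + τ^2) := by
      congr 1; ext s; ring
    rw [this]
    have i2 : IntervalIntegrable (fun s : ℝ => s^2) MeasureTheory.volume a (a+1) :=
      (continuous_pow 2).intervalIntegrable _ _
    have i1 : IntervalIntegrable (fun s : ℝ => (2*τ)*s) MeasureTheory.volume a (a+1) :=
      (continuous_const.mul continuous_id).intervalIntegrable _ _
    rw [intervalIntegral.integral_add (i2.sub i1) (intervalIntegrable_const),
      intervalIntegral.integral_sub i2 i1, intervalIntegral.integral_const_mul,
      integral_id, integral_pow, intervalIntegral.integral_const]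
    simp [smul_eq_mul]
    ring
  rw [h1, h2]
  have hu : 0 < a + 1 - τ := sub_pos.2 hτa
  nlinarith [mul_pos (mul_pos hu hu) hu, mul_nonneg ha (sq_nonneg (2*(a+1-τ)-1)),
    sq_nonneg (3*(a+1-τ)-1), ha]
end

section
/- Let n ≥ 2 be an integer, a ≥ 0 a real number, and τ a real number with 0 < τ < a + 1. Then ∫_a^{a+1} (s−τ)² · ( 2τ^n + 4τ^{n−1} s + n s^n ) ds ≥ (1/12) · ( 14/5 + n·5^{−n} ) · τ^n. -/
theorem stmt10 (n : ℕ) (hn : 2 ≤ n) (a : ℝ) (ha : 0 ≤ a) (τ : ℝ)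
    (hτ : 0 < τ) (hτa : τ < a + 1) :
    (∫ s in a..(a + 1), (s - τ) ^ 2 * (2 * τ ^ n + 4 * τ ^ (n - 1) * s + (n : ℝ) * s ^ n))
      ≥ (1 / 12) * (14 / 5 + (n : ℝ) * (1 / 5 : ℝ) ^ n) * τ ^ n := by
  have hτn1 : (0:ℝ) < τ ^ (n - 1) := pow_pos hτ _
  have hτpow : τ ^ n = τ ^ (n - 1) * τ := by
    rw [← pow_succ]; congr 1; omega
  -- bound n * (1/5)^n ≤ 2/25
  have h5 : ∀ m : ℕ, 2 ≤ m → (m : ℝ) ≤ 2 / 25 * 5 ^ m := by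
    intro m hm
    induction m with
    | zero => norm_num at hm
    | succ k ih =>
      rcases Nat.lt_or_ge k 2 with hk | hk
      · interval_cases k <;> [omega; norm_num]
      · have := ih hk
        have h1 : (1:ℝ) ≤ 2 / 25 * 5 ^ k := by
          calc (1:ℝ) ≤ 2/25 * 5^2 := by norm_num
          _ ≤ 2/25 * 5^k := by
              gcongr <;> norm_num
        push_cast
        calc (k : ℝ) + 1 ≤ 2/25 * 5^k + 4 * (2/25 * 5^k) := by linarith
        _ = 2/25 * 5^(k+1) := by ring
  have hn5 : (n : ℝ) * (1 / 5 : ℝ) ^ n ≤ 2 / 25 := by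
    have h := h5 n hn
    have h5n : (0:ℝ) < (5:ℝ) ^ n := by positivity
    rw [div_pow, one_pow]
    rw [mul_one_div, div_le_iff₀ h5n]
    linarith
  -- the reduced integrand
  set g : ℝ → ℝ := fun s => τ ^ (n - 1) * (4 * s ^ 3 - 6 * τ * s ^ 2 + 2 * τ ^ 3) with hg
  have hab : a ≤ a + 1 := by linarith
  have hgint : IntervalIntegrable g MeasureTheory.volume a (a + 1) := by
    apply Continuous.intervalIntegrable; fun_prop
  have hfint : IntervalIntegrable
      (fun s => (s - τ) ^ 2 * (2 * τ ^ n + 4 * τ ^ (n - 1) * s + (n : ℝ) * s ^ n))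
      MeasureTheory.volume a (a + 1) := by
    apply Continuous.intervalIntegrable; fun_prop
  have hmono : (∫ s in a..(a + 1), g s) ≤
      ∫ s in a..(a + 1), (s - τ) ^ 2 * (2 * τ ^ n + 4 * τ ^ (n - 1) * s + (n : ℝ) * s ^ n) := by
    apply intervalIntegral.integral_mono_on hab hgint hfint
    intro s hs
    have hs0 : 0 ≤ s := le_trans ha hs.1
    have hsn : 0 ≤ (n : ℝ) * s ^ n := by positivity
    have : g s = (s - τ) ^ 2 * (2 * τ ^ n + 4 * τ ^ (n - 1) * s) := by
      rw [hτpow]; simp only [hg]; ring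
    rw [this]
    nlinarith [sq_nonneg (s - τ)]
  -- compute the reduced integral
  have hcomp : (∫ s in a..(a + 1), g s) =
      τ ^ (n - 1) * (((a+1)^4 - a^4) - 2*τ*((a+1)^3 - a^3) + 2*τ^3) := by
    have hderiv : ∀ s ∈ Set.uIcc a (a + 1),
        HasDerivAt (fun x : ℝ => τ ^ (n - 1) * (x ^ 4 - 2 * τ * x ^ 3 + 2 * τ ^ 3 * x)) (g s) s := by
      intro s _
      have h1 := hasDerivAt_pow 4 s
      have h2 := (hasDerivAt_pow 3 s).const_mul (2 * τ)
      have h3 := (hasDerivAt_id s).const_mul (2 * τ ^ 3)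
      have : HasDerivAt (fun x : ℝ => τ ^ (n - 1) * (x ^ 4 - 2 * τ * x ^ 3 + 2 * τ ^ 3 * x)) _ s :=
        (((h1.sub h2).add h3).const_mul (τ ^ (n - 1)))
      convert this using 1
      simp only [hg]
      push_cast
      ring
    rw [intervalIntegral.integral_eq_sub_of_hasDerivAt hderiv hgint]
    ring
  -- polynomial inequality
  have hpoly : ((a+1)^4 - a^4) - 2*τ*((a+1)^3 - a^3) + 2*τ^3 ≥ (6/25)*τ := by
    nlinarith [sq_nonneg (τ - a - 1/2), sq_nonneg (τ - 3/5), mul_nonneg ha hτ.le,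
      sq_nonneg (a - τ + 1), mul_nonneg (mul_nonneg ha ha) hτ.le,
      mul_nonneg ha (sq_nonneg (τ-1)), sq_nonneg (5*τ - 3), mul_nonneg ha (sq_nonneg (a - τ))]
  have hlow : (6/25) * τ ^ n ≤ ∫ s in a..(a + 1), g s := by
    rw [hcomp, hτpow]
    calc (6:ℝ)/25 * (τ ^ (n-1) * τ) = τ ^ (n-1) * ((6/25) * τ) := by ring
    _ ≤ τ ^ (n-1) * (((a+1)^4 - a^4) - 2*τ*((a+1)^3 - a^3) + 2*τ^3) := by
        apply mul_le_mul_of_nonneg_left hpoly hτn1.le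
  have hτnpos : (0:ℝ) < τ ^ n := pow_pos hτ n
  have hrhs : (1 / 12) * (14 / 5 + (n : ℝ) * (1 / 5 : ℝ) ^ n) * τ ^ n ≤ (6/25) * τ ^ n := by
    apply mul_le_mul_of_nonneg_right _ hτnpos.le
    linarith
  linarith
end

section
/- Let n ≥ 2 and l ≥ 2 be integers and let ψ : [0,∞) → [0,∞) be an absolutely continuous decreasing function with ψ(0) = 1 and −1 ≤ ψ'(s) ≤ 0 for almost every s. Suppose A = ∫_0^∞ s^{n−1} ψ(s) ds and B = ∫_0^∞ s^{2l+n−1} ψ(s) ds are both finite, and let a ≥ 0 be a real number satisfying ((a+1)^{n+1} − a^{n+1})/(n+1) = n·A. Then B ≥ (1/n)·(nA)^{(2l+n)/n} + S_{n+2l+1}/((2l+n)(n+2l+1)) − (nA)^{2l/n}·S_{n+1}/(n(n+1)). -/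
open MeasureTheory

lemma psi0_integrable (a : ℝ) (ha : 0 ≤ a) (j : ℕ) :
    IntegrableOn (fun s : ℝ => s ^ j * min 1 (max 0 (a + 1 - s))) (Set.Ioi 0) volume := by
  have ha1 : (0:ℝ) ≤ a + 1 := by linarith
  have hcont : Continuous (fun s : ℝ => s ^ j * min 1 (max 0 (a + 1 - s))) := by fun_prop
  rw [show Set.Ioi (0:ℝ) = Set.Ioc 0 (a+1) ∪ Set.Ioi (a+1) from
    (Set.Ioc_union_Ioi_eq_Ioi ha1).symm]
  refine (hcont.integrableOn_Ioc).union ?_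
  refine IntegrableOn.congr_fun integrableOn_zero ?_ measurableSet_Ioi
  intro s hs
  have : a + 1 - s ≤ 0 := by simp at hs; linarith
  simp [max_eq_left this]


lemma psi0_integral (a : ℝ) (ha : 0 ≤ a) (j : ℕ) :
    ∫ s in Set.Ioi (0:ℝ), s ^ j * min 1 (max 0 (a + 1 - s)) =
      ((a+1)^(j+2) - a^(j+2)) / (((j:ℝ)+1) * ((j:ℝ)+2)) := by
  have ha1 : (0:ℝ) ≤ a + 1 := by linarith
  have hcont : Continuous (fun s : ℝ => s ^ j * min 1 (max 0 (a + 1 - s))) := by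
    fun_prop
  have hsplit : Set.Ioi (0:ℝ) = Set.Ioc 0 (a+1) ∪ Set.Ioi (a+1) :=
    (Set.Ioc_union_Ioi_eq_Ioi ha1).symm
  rw [hsplit, setIntegral_union (Set.Ioc_disjoint_Ioi le_rfl) measurableSet_Ioi
      (hcont.integrableOn_Ioc)
      (by
        refine IntegrableOn.congr_fun integrableOn_zero ?_ measurableSet_Ioi
        intro s hs
        have : a + 1 - s ≤ 0 := by simp at hs; linarith
        simp [max_eq_left this])]
  have hzero : ∫ s in Set.Ioi (a+1), s ^ j * min 1 (max 0 (a + 1 - s)) = 0 := by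
    rw [setIntegral_congr_fun measurableSet_Ioi (g := fun _ => (0:ℝ)) ?_]
    · simp
    · intro s hs
      have : a + 1 - s ≤ 0 := by simp at hs; linarith
      simp [max_eq_left this]
  rw [hzero, add_zero, ← intervalIntegral.integral_of_le ha1]
  have hadj := intervalIntegral.integral_add_adjacent_intervals
    (a := (0:ℝ)) (b := a) (c := a+1) (f := fun s => s ^ j * min 1 (max 0 (a + 1 - s)))
    ((hcont.intervalIntegrable (μ := volume) 0 a)) ((hcont.intervalIntegrable (μ := volume) a (a+1)))
  rw [← hadj]
  have h1 : ∫ s in (0:ℝ)..a, s ^ j * min 1 (max 0 (a + 1 - s)) = ∫ s in (0:ℝ)..a, s ^ j := by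
    apply intervalIntegral.integral_congr
    intro s hs
    rw [Set.uIcc_of_le ha] at hs
    have h1 : (1:ℝ) ≤ a + 1 - s := by obtain ⟨h, h'⟩ := hs; linarith
    have h0 : (0:ℝ) ≤ a + 1 - s := by linarith
    simp [max_eq_right h0, min_eq_left h1]
  have h2 : ∫ s in a..(a+1), s ^ j * min 1 (max 0 (a + 1 - s))
      = ∫ s in a..(a+1), ((a+1) * s ^ j - s ^ (j+1)) := by
    apply intervalIntegral.integral_congr
    intro s hs
    rw [Set.uIcc_of_le (by linarith : a ≤ a+1)] at hs
    obtain ⟨hsa, hsb⟩ := hs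
    have h0 : (0:ℝ) ≤ a + 1 - s := by linarith
    have h1 : a + 1 - s ≤ 1 := by linarith
    simp only []
    rw [max_eq_right h0, min_eq_right h1]
    ring
  rw [h1, h2, intervalIntegral.integral_sub ((Continuous.intervalIntegrable (by fun_prop) a (a+1))) ((Continuous.intervalIntegrable (by fun_prop) a (a+1))),
    intervalIntegral.integral_const_mul, integral_pow, integral_pow, integral_pow]
  have hj1 : ((j:ℝ)+1) ≠ 0 := by positivity
  have hj2 : ((j:ℝ)+2) ≠ 0 := by positivity
  push_cast
  field_simp
  ring

/-- Lemma (Melas-type) for the poly-Laplacian: lower bound for the higher moment `B` of a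
decreasing, absolutely continuous function `ψ` on `[0,∞)` with `ψ(0) = 1` and
`-1 ≤ ψ' ≤ 0` almost everywhere.  Absolute continuity is encoded via the fundamental
theorem of calculus: `ψ t = ψ 0 + ∫_0^t ψ'`. -/
theorem stmt13 (n l : ℕ) (hn : 2 ≤ n) (hl : 2 ≤ l) (ψ : ℝ → ℝ)
    (hψ_nonneg : ∀ s, 0 ≤ s → 0 ≤ ψ s)
    (hψ_anti : AntitoneOn ψ (Set.Ici 0))
    (hψ0 : ψ 0 = 1)
    (hψ_ftc : ∀ t, 0 ≤ t → ψ t = ψ 0 + ∫ s in (0:ℝ)..t, deriv ψ s)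
    (hψ_deriv : ∀ᵐ s ∂volume, 0 ≤ s → -1 ≤ deriv ψ s ∧ deriv ψ s ≤ 0)
    (A B : ℝ)
    (hA : A = ∫ s in Set.Ioi (0:ℝ), s ^ (n - 1) * ψ s)
    (hAint : IntegrableOn (fun s => s ^ (n - 1) * ψ s) (Set.Ioi 0))
    (hB : B = ∫ s in Set.Ioi (0:ℝ), s ^ (2 * l + n - 1) * ψ s)
    (hBint : IntegrableOn (fun s => s ^ (2 * l + n - 1) * ψ s) (Set.Ioi 0))
    (a : ℝ) (ha : 0 ≤ a)
    (haA : ((a + 1) ^ (n + 1) - a ^ (n + 1)) / ((n : ℝ) + 1) = (n : ℝ) * A) :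
    B ≥ (1 / (n : ℝ)) * ((n : ℝ) * A) ^ ((2 * (l : ℝ) + (n : ℝ)) / (n : ℝ))
        + ((a + 1) ^ (n + 2 * l + 1) - a ^ (n + 2 * l + 1))
            / ((2 * (l : ℝ) + (n : ℝ)) * ((n : ℝ) + 2 * (l : ℝ) + 1))
        - ((n : ℝ) * A) ^ (2 * (l : ℝ) / (n : ℝ)) * ((a + 1) ^ (n + 1) - a ^ (n + 1))
            / ((n : ℝ) * ((n : ℝ) + 1)) := by
  have hn0 : (0:ℝ) < (n:ℝ) := by exact_mod_cast (show 0 < n by omega)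
  set Φ : ℝ → ℝ := fun s => min 1 (max 0 (a + 1 - s)) with hΦ
  -- integrability of deriv ψ on Ioc u t for 0 ≤ u
  have hmeas : Measurable (deriv ψ) := measurable_deriv ψ
  have hIntOn : ∀ u t : ℝ, 0 ≤ u → IntegrableOn (deriv ψ) (Set.Ioc u t) volume := by
    intro u t hu
    refine Integrable.mono' (g := fun _ => (1:ℝ))
      (integrableOn_const measure_Ioc_lt_top.ne)
      (hmeas.aestronglyMeasurable.restrict) ?_
    rw [ae_restrict_iff' measurableSet_Ioc]
    filter_upwards [hψ_deriv] with s hs hsm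
    have h := hs (by linarith [hsm.1])
    rw [Real.norm_eq_abs, abs_le]
    constructor <;> linarith [h.1, h.2]
  have hIntD : ∀ t : ℝ, 0 ≤ t → IntervalIntegrable (deriv ψ) volume 0 t := by
    intro t ht
    rw [intervalIntegrable_iff_integrableOn_Ioc_of_le ht]
    exact hIntOn 0 t le_rfl
  -- monotonicity of ψ + id on [0,∞)
  have hg : ∀ u t : ℝ, 0 ≤ u → u ≤ t → ψ u + u ≤ ψ t + t := by
    intro u t hu hut
    have ht : 0 ≤ t := le_trans hu hut
    have h1 : ψ t - ψ u = ∫ s in u..t, deriv ψ s := by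
      rw [hψ_ftc t ht, hψ_ftc u hu,
        ← intervalIntegral.integral_interval_sub_left (hIntD t ht) (hIntD u hu)]
      ring
    have h2 : -(t - u) ≤ ∫ s in u..t, deriv ψ s := by
      rw [intervalIntegral.integral_of_le hut]
      have hconst : -(t-u) = ∫ _ in Set.Ioc u t, (-1 : ℝ) := by
        rw [setIntegral_const]
        simp [Real.volume_Ioc, ENNReal.toReal_ofReal (by linarith : (0:ℝ) ≤ t - u)]
        rw [max_eq_left (by linarith : (0:ℝ) ≤ t - u)]; ring
      rw [hconst]
      refine setIntegral_mono_ae_restrict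
        (integrableOn_const (C := (-1:ℝ)) measure_Ioc_lt_top.ne)
        (hIntOn u t hu) ?_
      refine (ae_restrict_iff' measurableSet_Ioc).mpr ?_
      filter_upwards [hψ_deriv] with s hs hsm
      exact (hs (by linarith [hsm.1])).1
    linarith
  have hψle1 : ∀ s : ℝ, 0 ≤ s → ψ s ≤ 1 := fun s hs =>
    hψ0 ▸ hψ_anti Set.self_mem_Ici hs hs
  -- the crossing point c
  set S : Set ℝ := {s : ℝ | s ∈ Set.Icc a (a+1) ∧ ψ s + s ≤ a + 1} with hSdef
  have haS : a ∈ S := ⟨⟨le_rfl, by linarith⟩, by linarith [hψle1 a ha]⟩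
  have hbdd : BddAbove S := ⟨a+1, fun x hx => hx.1.2⟩
  set c := sSup S with hc
  have hac : a ≤ c := le_csSup hbdd haS
  have hca1 : c ≤ a + 1 := csSup_le ⟨a, haS⟩ (fun x hx => hx.1.2)
  have hc0 : 0 ≤ c := le_trans ha hac
  -- sign lemma
  have hsign : ∀ s : ℝ, 0 ≤ s → 0 ≤ (s ^ (2*l) - c ^ (2*l)) * (ψ s - Φ s) := by
    intro s hs
    rcases lt_trichotomy s c with hlt | heq | hgt
    · have hpow : s ^ (2*l) ≤ c ^ (2*l) := pow_le_pow_left₀ hs hlt.le _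
      have hψΦ : ψ s ≤ Φ s := by
        obtain ⟨s', hs'S, hss'⟩ := exists_lt_of_lt_csSup ⟨a, haS⟩ hlt
        have h1 : ψ s + s ≤ ψ s' + s' := hg s s' hs hss'.le
        have h2 : ψ s + s ≤ a + 1 := le_trans h1 hs'S.2
        exact le_min (hψle1 s hs) (le_max_of_le_right (by linarith))
      nlinarith
    · simp [heq]
    · have hpow : c ^ (2*l) ≤ s ^ (2*l) := pow_le_pow_left₀ hc0 hgt.le _
      have hψΦ : Φ s ≤ ψ s := by
        by_cases hsa1 : s ≤ a + 1
        · have hsnS : s ∉ S := fun hmem => absurd (le_csSup hbdd hmem) (not_le.mpr hgt)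
          have hns : ¬ (ψ s + s ≤ a + 1) := fun h => hsnS ⟨⟨le_trans hac hgt.le, hsa1⟩, h⟩
          have h2 : a + 1 - s < ψ s := by linarith [not_le.mp hns]
          calc Φ s ≤ max 0 (a+1-s) := min_le_right _ _
            _ = a + 1 - s := max_eq_right (by linarith)
            _ ≤ ψ s := h2.le
        · have h0 : a + 1 - s ≤ 0 := by linarith [not_le.mp hsa1]
          have hΦ0 : Φ s = 0 := by simp [hΦ, max_eq_left h0]
          rw [hΦ0]; exact hψ_nonneg s hs
      nlinarith
  -- values of the Φ integrals
  have hI4 : ∫ s in Set.Ioi (0:ℝ), s ^ (n-1) * Φ s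
      = ((a+1)^(n+1) - a^(n+1)) / ((n:ℝ) * ((n:ℝ)+1)) := by
    have h := psi0_integral a ha (n-1)
    rw [show n - 1 + 2 = n + 1 from by omega] at h
    simp only [hΦ]
    rw [h, Nat.cast_sub (by omega : 1 ≤ n)]
    norm_num
    ring_nf
  have hI3 : ∫ s in Set.Ioi (0:ℝ), s ^ (2*l+n-1) * Φ s
      = ((a+1)^(n+2*l+1) - a^(n+2*l+1))
          / ((2*(l:ℝ)+(n:ℝ)) * ((n:ℝ)+2*(l:ℝ)+1)) := by
    have h := psi0_integral a ha (2*l+n-1)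
    rw [show 2*l+n - 1 + 2 = n + 2*l + 1 from by omega] at h
    simp only [hΦ]
    rw [h, Nat.cast_sub (by omega : 1 ≤ 2*l+n)]
    push_cast
    ring_nf
  -- A in terms of a
  have hnA : (0:ℝ) < (n:ℝ) * A := by
    rw [← haA]
    apply div_pos
    · have : a ^ (n+1) < (a+1)^(n+1) := by
        apply pow_lt_pow_left₀ (by linarith) ha (by omega)
      linarith
    · positivity
  have hSn : ((a+1)^(n+1) - a^(n+1)) = ((n:ℝ)+1) * ((n:ℝ)*A) := by
    rw [← haA]; field_simp
  have hI4A : ∫ s in Set.Ioi (0:ℝ), s ^ (n-1) * Φ s = A := by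
    rw [hI4, hSn]
    field_simp
  -- main comparison inequality
  have hΦint : ∀ j : ℕ, IntegrableOn (fun s : ℝ => s ^ j * Φ s) (Set.Ioi 0) volume := by
    intro j; simp only [hΦ]; exact psi0_integrable a ha j
  set c2 : ℝ := c ^ (2*l) with hc2
  have hnneg : 0 ≤ ∫ s in Set.Ioi (0:ℝ),
      ((s ^ (2*l+n-1) * ψ s - c2 * (s ^ (n-1) * ψ s))
        - (s ^ (2*l+n-1) * Φ s - c2 * (s ^ (n-1) * Φ s))) := by
    apply setIntegral_nonneg measurableSet_Ioi
    intro s hs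
    have hs0 : 0 ≤ s := le_of_lt hs
    have hpe : s ^ (2*l+n-1) = s ^ (n-1) * s ^ (2*l) := by
      rw [← pow_add]; congr 1; omega
    have hsn : 0 ≤ s ^ (n-1) := pow_nonneg hs0 _
    have hkey := mul_nonneg hsn (hsign s hs0)
    rw [hpe]; nlinarith [hkey]
  have int1 : IntegrableOn (fun s : ℝ => s ^ (2*l+n-1) * ψ s - c2 * (s ^ (n-1) * ψ s))
      (Set.Ioi 0) volume := hBint.sub (hAint.const_mul c2)
  have int2 : IntegrableOn (fun s : ℝ => s ^ (2*l+n-1) * Φ s - c2 * (s ^ (n-1) * Φ s))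
      (Set.Ioi 0) volume := (hΦint (2*l+n-1)).sub ((hΦint (n-1)).const_mul c2)
  have int3 : IntegrableOn (fun s : ℝ => c2 * (s ^ (n-1) * ψ s)) (Set.Ioi 0) volume :=
    hAint.const_mul c2
  have int4 : IntegrableOn (fun s : ℝ => c2 * (s ^ (n-1) * Φ s)) (Set.Ioi 0) volume :=
    (hΦint (n-1)).const_mul c2
  rw [integral_sub int1 int2, integral_sub hBint int3,
      integral_sub (hΦint (2*l+n-1)) int4,
      integral_const_mul, integral_const_mul, ← hA, ← hB, hI4A, hI3] at hnneg
  -- final arithmetic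
  have hrpow : ((n:ℝ)*A) ^ ((2*(l:ℝ)+(n:ℝ))/(n:ℝ))
      = ((n:ℝ)*A) ^ (2*(l:ℝ)/(n:ℝ)) * ((n:ℝ)*A) := by
    rw [show (2*(l:ℝ)+(n:ℝ))/(n:ℝ) = 2*(l:ℝ)/(n:ℝ) + 1 by field_simp,
      Real.rpow_add hnA, Real.rpow_one]
  rw [ge_iff_le, hSn, hrpow]
  have hX : (1/(n:ℝ)) * (((n:ℝ)*A) ^ (2*(l:ℝ)/(n:ℝ)) * ((n:ℝ)*A))
      = ((n:ℝ)*A) ^ (2*(l:ℝ)/(n:ℝ)) * (((n:ℝ)+1) * ((n:ℝ)*A)) / ((n:ℝ)*((n:ℝ)+1)) := by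
    field_simp
  linarith [hnneg, hX]
end

section
/- Let n ≥ 2 and l ≥ 2 be integers, a ≥ 0 a real number, and τ a real number with 0 < τ < a + 1. Define H(s) = 2l·τ^{n+2l−2} + 4l·τ^{n+2l−3}·s + n(2l−1)·τ^{2l−2}·s^n + n(2l−2)·τ^{2l−3}·s^{n+1} + n(2l−3)·τ^{2l−4}·s^{n+2} and Q(x) = 2l + 4l·x + n(2l−1)·x^n + n(2l−2)·x^{n+1} + n(2l−3)·x^{n+2}. Then ∫_a^{a+1} (s−τ)²·H(s) ds ≥ (1/12)·Q(1/5)·τ^{n+2l−2}. -/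
/-- The function `H(s)` from the proof of Corollary 3.2. -/
def H (n l : ℕ) (τ s : ℝ) : ℝ :=
  2 * (l : ℝ) * τ ^ (n + 2 * l - 2) + 4 * (l : ℝ) * τ ^ (n + 2 * l - 3) * s
    + (n : ℝ) * (2 * (l : ℝ) - 1) * τ ^ (2 * l - 2) * s ^ n
    + (n : ℝ) * (2 * (l : ℝ) - 2) * τ ^ (2 * l - 3) * s ^ (n + 1)
    + (n : ℝ) * (2 * (l : ℝ) - 3) * τ ^ (2 * l - 4) * s ^ (n + 2)

/-- The polynomial `Q(x)` from the proof of Corollary 3.2. -/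
def Q (n l : ℕ) (x : ℝ) : ℝ :=
  2 * (l : ℝ) + 4 * (l : ℝ) * x + (n : ℝ) * (2 * (l : ℝ) - 1) * x ^ n
    + (n : ℝ) * (2 * (l : ℝ) - 2) * x ^ (n + 1)
    + (n : ℝ) * (2 * (l : ℝ) - 3) * x ^ (n + 2)

/-- Antiderivative computation for a cubic polynomial. -/
lemma cubic_integral (c0 c1 c2 c3 A B : ℝ) :
    ∫ s in A..B, (c0 + c1*s + c2*s^2 + c3*s^3) =
      (c0*B + c1*B^2/2 + c2*B^3/3 + c3*B^4/4) - (c0*A + c1*A^2/2 + c2*A^3/3 + c3*A^4/4) := by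
  have h : ∀ x ∈ Set.uIcc A B, HasDerivAt
      (fun s : ℝ => c0*s + c1*s^2/2 + c2*s^3/3 + c3*s^4/4)
      (c0 + c1*x + c2*x^2 + c3*x^3) x := by
    intro x _
    have h1 : HasDerivAt (fun s : ℝ => c0*s) c0 x := by
      simpa using (hasDerivAt_id x).const_mul c0
    have h2 : HasDerivAt (fun s : ℝ => c1*s^2/2) (c1*x) x := by
      convert ((hasDerivAt_pow 2 x).const_mul c1).div_const 2 using 1
      rotate_left 2
      push_cast; ring
      all_goals rfl
    have h3 : HasDerivAt (fun s : ℝ => c2*s^3/3) (c2*x^2) x := by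
      convert ((hasDerivAt_pow 3 x).const_mul c2).div_const 3 using 1
      rotate_left 2
      push_cast; ring
      all_goals rfl
    have h4 : HasDerivAt (fun s : ℝ => c3*s^4/4) (c3*x^3) x := by
      convert ((hasDerivAt_pow 4 x).const_mul c3).div_const 4 using 1
      rotate_left 2
      push_cast; ring
      all_goals rfl
    exact ((h1.add h2).add h3).add h4
  rw [intervalIntegral.integral_eq_sub_of_hasDerivAt h
    (Continuous.intervalIntegrable (by continuity) A B)]

lemma nat5 (n : ℕ) (hn : 2 ≤ n) : 25 * n ≤ 2 * 5 ^ n := by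
  induction n with
  | zero => omega
  | succ m ih =>
    rcases Nat.lt_or_ge m 2 with h | h
    · interval_cases m <;> simp_all
    · have := ih h
      have h5 : 25 ≤ 5 ^ m := by
        calc 25 = 5^2 := by norm_num
        _ ≤ 5^m := Nat.pow_le_pow_right (by norm_num) h
      have h6 : 5^(m+1) = 5*5^m := by ring
      omega

lemma key_n (n : ℕ) (hn : 2 ≤ n) : (n : ℝ) * (1/5 : ℝ)^n ≤ 2/25 := by
  have h := nat5 n hn
  have h5 : (0:ℝ) < 5^n := by positivity
  have hcast : (25:ℝ) * n ≤ 2 * 5^n := by exact_mod_cast h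
  rw [show ((1:ℝ)/5)^n = 1/5^n by rw [div_pow, one_pow]]
  rw [mul_one_div, div_le_div_iff₀ h5 (by norm_num : (0:ℝ) < 25)]
  linarith

lemma Q_bound (n l : ℕ) (hn : 2 ≤ n) (hl : 2 ≤ l) :
    Q n l (1/5) ≤ 2 * (l:ℝ) * (937/625) := by
  have hl2 : (2:ℝ) ≤ (l:ℝ) := by exact_mod_cast hl
  have ht : (n : ℝ) * (1/5 : ℝ)^n ≤ 2/25 := key_n n hn
  have ht0 : (0:ℝ) ≤ (n : ℝ) * (1/5 : ℝ)^n := by positivity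
  have hA : 2*(l:ℝ) * ((n : ℝ) * (1/5 : ℝ)^n) ≤ 2*(l:ℝ) * (2/25) :=
    mul_le_mul_of_nonneg_left ht (by linarith)
  unfold Q
  rw [pow_succ, pow_succ, pow_succ]
  nlinarith [ht, ht0, hl2, hA]

lemma key_poly (a τ : ℝ) (ha : 0 ≤ a) (hτ : 0 < τ) (hτa : τ < a + 1) :
    τ*(τ^2 - τ*(2*a+1) + (3*a^2+3*a+1)/3)
      + 2*(τ^2*(2*a+1)/2 - 2*τ*(3*a^2+3*a+1)/3 + (4*a^3+6*a^2+4*a+1)/4)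
      ≥ (937/7500)*τ := by
  nlinarith [mul_nonneg (sq_nonneg (2*τ-2*a-1)) hτ.le,
    mul_nonneg (sq_nonneg (2*τ-2*a-1)) ha,
    sq_nonneg (7500*τ-7500*a-5156), ha, hτ.le, sq_nonneg (2*τ-2*a-1)]

set_option maxHeartbeats 1600000 in
theorem stmt16 (n l : ℕ) (hn : 2 ≤ n) (hl : 2 ≤ l) (a : ℝ) (ha : 0 ≤ a) (τ : ℝ)
    (hτ : 0 < τ) (hτa : τ < a + 1) :
    (∫ s in a..(a + 1), (s - τ) ^ 2 * H n l τ s)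
      ≥ (1 / 12) * Q n l (1 / 5) * τ ^ (n + 2 * l - 2) := by
  have hl2 : (2:ℝ) ≤ (l:ℝ) := by exact_mod_cast hl
  have hn2 : (2:ℝ) ≤ (n:ℝ) := by exact_mod_cast hn
  have hτ0 : (0:ℝ) ≤ τ := hτ.le
  set C1 : ℝ := 2*(l:ℝ)*τ^(n+2*l-2) with hC1
  set C2 : ℝ := 4*(l:ℝ)*τ^(n+2*l-3) with hC2
  have hle : a ≤ a + 1 := by linarith
  -- pointwise bound
  have hpt : ∀ s ∈ Set.Icc a (a+1),
      (s-τ)^2 * (C1 + C2*s) ≤ (s-τ)^2 * H n l τ s := by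
    intro s hs
    have hs0 : (0:ℝ) ≤ s := le_trans ha hs.1
    apply mul_le_mul_of_nonneg_left _ (sq_nonneg _)
    show C1 + C2*s ≤ H n l τ s
    simp only [H, hC1, hC2]
    have t3 : 0 ≤ (n:ℝ)*(2*(l:ℝ)-1)*τ^(2*l-2)*s^n :=
      mul_nonneg (mul_nonneg (mul_nonneg (by positivity) (by linarith)) (by positivity))
        (by positivity)
    have t4 : 0 ≤ (n:ℝ)*(2*(l:ℝ)-2)*τ^(2*l-3)*s^(n+1) :=
      mul_nonneg (mul_nonneg (mul_nonneg (by positivity) (by linarith)) (by positivity))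
        (by positivity)
    have t5 : 0 ≤ (n:ℝ)*(2*(l:ℝ)-3)*τ^(2*l-4)*s^(n+2) :=
      mul_nonneg (mul_nonneg (mul_nonneg (by positivity) (by linarith)) (by positivity))
        (by positivity)
    linarith
  -- integrability
  have hint1 : IntervalIntegrable (fun s => (s-τ)^2 * H n l τ s) MeasureTheory.volume a (a+1) := by
    apply Continuous.intervalIntegrable
    simp only [H]
    continuity
  have hint2 : IntervalIntegrable (fun s => (s-τ)^2 * (C1 + C2*s)) MeasureTheory.volume a (a+1) := by
    apply Continuous.intervalIntegrable
    continuity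
  have hmono := intervalIntegral.integral_mono_on hle hint2 hint1 hpt
  -- compute the lower integral
  have hcongr : (∫ s in a..(a+1), (s-τ)^2 * (C1 + C2*s))
      = ∫ s in a..(a+1), (C1*τ^2 + (C2*τ^2 - 2*C1*τ)*s + (C1 - 2*C2*τ)*s^2 + C2*s^3) :=
    intervalIntegral.integral_congr (fun s _ => by ring)
  rw [hcongr, cubic_integral] at hmono
  refine le_trans ?_ hmono
  -- final estimate
  have hX : (0:ℝ) < τ^(n+2*l-3) := pow_pos hτ _
  have hpow : τ^(n+2*l-2) = τ^(n+2*l-3) * τ := by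
    rw [← pow_succ]
    congr 1
    omega
  have hQ := Q_bound n l hn hl
  have key := key_poly a τ ha hτ hτa
  have heq : (C1*τ^2*(a+1) + (C2*τ^2 - 2*C1*τ)*(a+1)^2/2 + (C1 - 2*C2*τ)*(a+1)^3/3
        + C2*(a+1)^4/4)
      - (C1*τ^2*a + (C2*τ^2 - 2*C1*τ)*a^2/2 + (C1 - 2*C2*τ)*a^3/3 + C2*a^4/4)
      = 2*(l:ℝ)*τ^(n+2*l-3)
        * (τ*(τ^2 - τ*(2*a+1) + (3*a^2+3*a+1)/3)
          + 2*(τ^2*(2*a+1)/2 - 2*τ*(3*a^2+3*a+1)/3 + (4*a^3+6*a^2+4*a+1)/4)) := by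
    simp only [hC1, hC2, hpow]
    ring
  rw [heq]
  have step1 : 2*(l:ℝ)*τ^(n+2*l-3) * ((937/7500)*τ)
      ≤ 2*(l:ℝ)*τ^(n+2*l-3)
        * (τ*(τ^2 - τ*(2*a+1) + (3*a^2+3*a+1)/3)
          + 2*(τ^2*(2*a+1)/2 - 2*τ*(3*a^2+3*a+1)/3 + (4*a^3+6*a^2+4*a+1)/4)) :=
    mul_le_mul_of_nonneg_left key (by positivity)
  refine le_trans ?_ step1
  rw [hpow]
  nlinarith [mul_le_mul_of_nonneg_right hQ (mul_pos hX hτ).le, hX.le, hτ0,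
    mul_pos hX hτ]
end

section
/- Let n ≥ 1 be an integer and let Ω ⊆ ℝ^n be a bounded measurable set with Lebesgue measure V = vol(Ω) > 0. Then for every point p ∈ ℝ^n, ∫_Ω |x − p|² dx ≥ (n/(n+2))·V·(V/ω_n)^{2/n}, where ω_n is the volume of the unit ball in ℝ^n. In particular the moment of inertia I(Ω) = min_{p ∈ ℝ^n} ∫_Ω |x − p|² dx satisfies the same lower bound. -/
open MeasureTheory Metric Set

/-- Integral of `‖x‖²` over a closed ball of radius `r` in `ℝⁿ`. -/
lemma ball_sq_integral (n : ℕ) (hn : 1 ≤ n) {r : ℝ} (hr : 0 ≤ r) :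
    (∫ x in Metric.closedBall (0 : EuclideanSpace ℝ (Fin n)) r, ‖x‖ ^ 2)
      = (n : ℝ) * (volume (Metric.ball (0 : EuclideanSpace ℝ (Fin n)) 1)).toReal *
        (r ^ (n + 2) / (n + 2)) := by
  haveI : Inhabited (Fin n) := ⟨⟨0, hn⟩⟩
  haveI : Nontrivial (EuclideanSpace ℝ (Fin n)) := inferInstance
  have hdim : Module.finrank ℝ (EuclideanSpace ℝ (Fin n)) = n := by
    simp [finrank_euclideanSpace]
  set g : ℝ → ℝ := Set.indicator (Set.Icc 0 r) (fun t => t ^ 2) with hg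
  have h1 : (∫ x in Metric.closedBall (0 : EuclideanSpace ℝ (Fin n)) r, ‖x‖ ^ 2)
      = ∫ x : EuclideanSpace ℝ (Fin n), g ‖x‖ := by
    rw [← integral_indicator measurableSet_closedBall]
    congr 1
    ext x
    by_cases hx : ‖x‖ ≤ r <;>
      simp [hg, Set.indicator_apply, Metric.mem_closedBall, dist_zero_right, hx, norm_nonneg]
  rw [h1, integral_fun_norm_addHaar volume g, hdim]
  have h2 : (∫ y in Set.Ioi (0 : ℝ), y ^ (n - 1) • g y) = r ^ (n + 2) / (n + 2) := by
    have heq : ∀ y : ℝ, y ^ (n - 1) • g y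
        = Set.indicator (Set.Icc 0 r) (fun t => t ^ (n - 1) * t ^ 2) y := by
      intro y
      by_cases hy : y ∈ Set.Icc (0 : ℝ) r <;>
        simp [hg, Set.indicator_apply, hy, smul_eq_mul]
    simp_rw [heq]
    rw [integral_indicator measurableSet_Icc, Measure.restrict_restrict measurableSet_Icc]
    have hI : Set.Icc (0 : ℝ) r ∩ Set.Ioi 0 = Set.Ioc 0 r := by
      ext y
      simp only [Set.mem_inter_iff, Set.mem_Icc, Set.mem_Ioi, Set.mem_Ioc]
      constructor
      · rintro ⟨⟨_, h2⟩, h3⟩; exact ⟨h3, h2⟩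
      · rintro ⟨h1, h2⟩; exact ⟨⟨h1.le, h2⟩, h1⟩
    rw [hI]
    have hpow : ∀ y : ℝ, y ^ (n - 1) * y ^ 2 = y ^ (n + 1) := by
      intro y
      rw [← pow_add]
      congr 1
      omega
    simp_rw [hpow]
    rw [← intervalIntegral.integral_of_le hr, integral_pow]
    push_cast
    ring
  rw [h2, nsmul_eq_mul, smul_eq_mul]
  simp only [measureReal_def]
  ring

theorem stmt17 (n : ℕ) (hn : 1 ≤ n) (Ω : Set (EuclideanSpace ℝ (Fin n)))
    (hmeas : MeasurableSet Ω) (hbdd : Bornology.IsBounded Ω)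
    (hV : 0 < (volume Ω).toReal) (p : EuclideanSpace ℝ (Fin n)) :
    (∫ x in Ω, ‖x - p‖ ^ 2) ≥
      ((n : ℝ) / ((n : ℝ) + 2)) * (volume Ω).toReal *
        ((volume Ω).toReal /
            (volume (Metric.closedBall (0 : EuclideanSpace ℝ (Fin n)) 1)).toReal) ^
          ((2 : ℝ) / (n : ℝ)) := by
  haveI : Inhabited (Fin n) := ⟨⟨0, hn⟩⟩
  haveI : Nontrivial (EuclideanSpace ℝ (Fin n)) := inferInstance
  have hdim : Module.finrank ℝ (EuclideanSpace ℝ (Fin n)) = n := by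
    simp [finrank_euclideanSpace]
  set V : ℝ := (volume Ω).toReal with hVdef
  set ω : ℝ := (volume (Metric.closedBall (0 : EuclideanSpace ℝ (Fin n)) 1)).toReal with hωdef
  have hball_eq : volume (Metric.closedBall (0 : EuclideanSpace ℝ (Fin n)) 1) = volume (Metric.ball (0 : EuclideanSpace ℝ (Fin n)) 1) :=
    Measure.addHaar_closedBall_eq_addHaar_ball volume 0 1
  have hωpos : 0 < ω := by
    rw [hωdef, hball_eq]
    exact ENNReal.toReal_pos (measure_ball_pos volume 0 one_pos).ne' measure_ball_lt_top.ne
  have hΩfin : volume Ω ≠ ⊤ := by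
    obtain ⟨R, hR⟩ := hbdd.subset_closedBall p
    exact ((measure_mono hR).trans_lt measure_closedBall_lt_top).ne
  set r : ℝ := (V / ω) ^ ((1 : ℝ) / n) with hrdef
  have hVωpos : 0 < V / ω := div_pos hV hωpos
  have hrpos : 0 < r := Real.rpow_pos_of_pos hVωpos _
  have hrn : r ^ n = V / ω := by
    rw [hrdef, ← Real.rpow_natCast ((V / ω) ^ ((1:ℝ)/n)) n, ← Real.rpow_mul hVωpos.le]
    rw [one_div, inv_mul_cancel₀ (Nat.cast_ne_zero.mpr (by omega)),
      Real.rpow_one]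
  have hr2 : r ^ 2 = (V / ω) ^ ((2 : ℝ) / n) := by
    rw [hrdef, ← Real.rpow_natCast ((V / ω) ^ ((1:ℝ)/n)) 2, ← Real.rpow_mul hVωpos.le]
    congr 1
    push_cast
    ring
  set B := Metric.closedBall p r with hBdef
  have hBvol : volume B = volume Ω := by
    rw [hBdef, Measure.addHaar_closedBall volume p hrpos.le, hdim, ← hball_eq]
    have : volume (Metric.closedBall (0 : EuclideanSpace ℝ (Fin n)) 1) = ENNReal.ofReal ω :=
      (ENNReal.ofReal_toReal measure_closedBall_lt_top.ne).symm
    rw [this, ← ENNReal.ofReal_mul (by positivity), hrn,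
      div_mul_cancel₀ _ hωpos.ne', hVdef, ENNReal.ofReal_toReal hΩfin]
  have hBfin : volume B ≠ ⊤ := by rw [hBvol]; exact hΩfin
  -- integrability
  have hcont : Continuous fun x : EuclideanSpace ℝ (Fin n) => ‖x - p‖ ^ 2 := by fun_prop
  have hfΩ : IntegrableOn (fun x : EuclideanSpace ℝ (Fin n) => ‖x - p‖ ^ 2) Ω volume := by
    obtain ⟨R, hR⟩ := hbdd.subset_closedBall p
    refine Measure.integrableOn_of_bounded (M := R ^ 2) hΩfin
      hcont.aestronglyMeasurable ?_
    filter_upwards [ae_restrict_mem hmeas] with x hx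
    have h1 : ‖x - p‖ ≤ R := by
      have := hR hx
      rwa [Metric.mem_closedBall, dist_eq_norm] at this
    have : ‖x - p‖ ^ 2 ≤ R ^ 2 := pow_le_pow_left₀ (norm_nonneg _) h1 2
    rwa [Real.norm_eq_abs, abs_of_nonneg (by positivity)]
  have hfB : IntegrableOn (fun x : EuclideanSpace ℝ (Fin n) => ‖x - p‖ ^ 2) B volume :=
    hcont.continuousOn.integrableOn_compact (isCompact_closedBall p r)
  -- measures of the two difference sets agree
  have hBmeas : MeasurableSet B := measurableSet_closedBall
  have hinterfin : volume (Ω ∩ B) ≠ ⊤ :=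
    ((measure_mono Set.inter_subset_left).trans_lt (lt_top_iff_ne_top.mpr hΩfin)).ne
  have hdiffeq : volume (Ω \ B) = volume (B \ Ω) := by
    have h1 : volume (Ω ∩ B) + volume (Ω \ B) = volume Ω := measure_inter_add_diff Ω hBmeas
    have h2 : volume (B ∩ Ω) + volume (B \ Ω) = volume B := measure_inter_add_diff B hmeas
    rw [Set.inter_comm, hBvol, ← h1] at h2
    exact (ENNReal.add_right_inj hinterfin).mp h2.symm
  have hD1fin : volume (Ω \ B) ≠ ⊤ :=
    ((measure_mono Set.diff_subset).trans_lt (lt_top_iff_ne_top.mpr hΩfin)).ne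
  have hD2fin : volume (B \ Ω) ≠ ⊤ :=
    ((measure_mono Set.diff_subset).trans_lt (lt_top_iff_ne_top.mpr hBfin)).ne
  -- lower bound on Ω \ B
  have hlow : r ^ 2 * (volume (Ω \ B)).toReal ≤ ∫ x in Ω \ B, ‖x - p‖ ^ 2 := by
    refine setIntegral_ge_of_const_le_real (hmeas.diff hBmeas) hD1fin ?_
      (hfΩ.mono_set Set.diff_subset)
    intro x hx
    have : r < ‖x - p‖ := by
      have := hx.2
      rw [hBdef, Metric.mem_closedBall, dist_eq_norm, not_le] at this
      exact this
    exact pow_le_pow_left₀ hrpos.le this.le 2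
  -- upper bound on B \ Ω
  have hup : (∫ x in B \ Ω, ‖x - p‖ ^ 2) ≤ r ^ 2 * (volume (B \ Ω)).toReal := by
    have hnorm : ‖∫ x in B \ Ω, ‖x - p‖ ^ 2‖ ≤ r ^ 2 * (volume (B \ Ω)).toReal := by
      refine norm_setIntegral_le_of_norm_le_const (lt_top_iff_ne_top.mpr hD2fin)
        ?_
      intro x hx
      have h1 : ‖x - p‖ ≤ r := by
        have := hx.1
        rwa [hBdef, Metric.mem_closedBall, dist_eq_norm] at this
      rw [Real.norm_eq_abs, abs_of_nonneg (by positivity)]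
      exact pow_le_pow_left₀ (norm_nonneg _) h1 2
    exact (le_abs_self _).trans hnorm
  -- splitting the integrals
  have hsplitΩ : (∫ x in Ω, ‖x - p‖ ^ 2)
      = (∫ x in Ω ∩ B, ‖x - p‖ ^ 2) + ∫ x in Ω \ B, ‖x - p‖ ^ 2 := by
    rw [← setIntegral_union (disjoint_sdiff_self_right.mono_left Set.inter_subset_right)
      (hmeas.diff hBmeas) (hfΩ.mono_set Set.inter_subset_left)
      (hfΩ.mono_set Set.diff_subset), Set.inter_union_diff]
  have hsplitB : (∫ x in B, ‖x - p‖ ^ 2)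
      = (∫ x in Ω ∩ B, ‖x - p‖ ^ 2) + ∫ x in B \ Ω, ‖x - p‖ ^ 2 := by
    rw [Set.inter_comm Ω B,
      ← setIntegral_union (disjoint_sdiff_self_right.mono_left Set.inter_subset_right)
      (hBmeas.diff hmeas) (hfB.mono_set Set.inter_subset_left)
      (hfB.mono_set Set.diff_subset), Set.inter_union_diff]
  have hmain : (∫ x in B, ‖x - p‖ ^ 2) ≤ ∫ x in Ω, ‖x - p‖ ^ 2 := by
    rw [hsplitΩ, hsplitB]
    have heq : (volume (Ω \ B)).toReal = (volume (B \ Ω)).toReal := by rw [hdiffeq]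
    rw [heq] at hlow
    linarith [hlow, hup]
  -- compute the integral over the ball
  have htrans : (∫ x in B, ‖x - p‖ ^ 2)
      = ∫ x in Metric.closedBall (0 : EuclideanSpace ℝ (Fin n)) r, ‖x‖ ^ 2 := by
    rw [← integral_indicator hBmeas, ← integral_indicator measurableSet_closedBall]
    have : ∀ x : EuclideanSpace ℝ (Fin n), Set.indicator B (fun x => ‖x - p‖ ^ 2) x
        = Set.indicator (Metric.closedBall (0 : EuclideanSpace ℝ (Fin n)) r) (fun y => ‖y‖ ^ 2) (x - p) := by
      intro x
      by_cases hx : x ∈ B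
      · have hx' : x - p ∈ Metric.closedBall (0 : EuclideanSpace ℝ (Fin n)) r := by
          rw [Metric.mem_closedBall, dist_zero_right]
          rwa [hBdef, Metric.mem_closedBall, dist_eq_norm] at hx
        rw [Set.indicator_of_mem hx, Set.indicator_of_mem hx']
      · have hx' : x - p ∉ Metric.closedBall (0 : EuclideanSpace ℝ (Fin n)) r := by
          rw [Metric.mem_closedBall, dist_zero_right]
          rwa [hBdef, Metric.mem_closedBall, dist_eq_norm] at hx
        rw [Set.indicator_of_notMem hx, Set.indicator_of_notMem hx']
    simp_rw [this]
    exact integral_sub_right_eq_self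
      (Set.indicator (Metric.closedBall (0 : EuclideanSpace ℝ (Fin n)) r) (fun y => ‖y‖ ^ 2)) p
  have hballval : (∫ x in B, ‖x - p‖ ^ 2)
      = (n : ℝ) / ((n : ℝ) + 2) * V * (V / ω) ^ ((2 : ℝ) / n) := by
    rw [htrans, ball_sq_integral n hn hrpos.le, ← hball_eq, ← hωdef]
    have hrsplit : r ^ (n + 2) = r ^ n * r ^ 2 := by ring
    rw [hrsplit, hrn, hr2]
    field_simp
  rw [ge_iff_le, ← hballval]
  exact hmain
end

section
/- Let Ω ⊆ ℝ^n be a bounded measurable set with vol(Ω) = V and I = ∫_Ω |x|² dx, and let u_1, …, u_k be an orthonormal family in L²(ℝ^n) with each u_j vanishing almost everywhere outside Ω. Define f_j(ξ) = (2π)^{−n/2} ∫_Ω u_j(x) e^{i x·ξ} dx and F(ξ) = Σ_{j=1}^{k} |f_j(ξ)|². Then F is differentiable and for every ξ ∈ ℝ^n, |∇F(ξ)| ≤ 2·(2π)^{−n}·√(V·I). -/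
open MeasureTheory Complex

lemma aux_hasFDeriv {n : ℕ} (x : EuclideanSpace ℝ (Fin n)) (a : ℂ) (ξ : EuclideanSpace ℝ (Fin n)) :
    HasFDerivAt (fun ξ : EuclideanSpace ℝ (Fin n) => a * Complex.exp (Complex.I * ((inner ℝ x ξ : ℝ) : ℂ)))
      ((a * Complex.exp (Complex.I * ((inner ℝ x ξ : ℝ) : ℂ)) * Complex.I) •
        (Complex.ofRealCLM.comp (innerSL ℝ x))) ξ := by
  have h1 : HasFDerivAt (fun ξ : EuclideanSpace ℝ (Fin n) => (inner ℝ x ξ : ℝ)) (innerSL ℝ x) ξ :=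
    (innerSL ℝ x).hasFDerivAt
  have h2 := (Complex.ofRealCLM.hasFDerivAt.comp ξ h1)
  have h3 := h2.const_mul Complex.I
  have h4 := h3.cexp
  have h5 := h4.const_mul a
  refine h5.congr_fderiv ?_
  ext v
  simp
  ring

lemma aux_norm_smul {n : ℕ} (x : EuclideanSpace ℝ (Fin n)) (a : ℂ) (ξ : EuclideanSpace ℝ (Fin n)) :
    ‖(a * Complex.exp (Complex.I * ((inner ℝ x ξ : ℝ) : ℂ)) * Complex.I) •
        (Complex.ofRealCLM.comp (innerSL ℝ x))‖ ≤ ‖a‖ * ‖x‖ := by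
  have h1 : ‖a * Complex.exp (Complex.I * ((inner ℝ x ξ : ℝ) : ℂ)) * Complex.I‖ = ‖a‖ := by
    have he : ‖(Complex.exp (Complex.I * ((inner ℝ x ξ : ℝ) : ℂ)))‖ = 1 := by
      rw [mul_comm]; exact Complex.norm_exp_ofReal_mul_I _
    rw [norm_mul, norm_mul, he, Complex.norm_I, mul_one, mul_one]
  apply ContinuousLinearMap.opNorm_le_bound _ (by positivity)
  intro v
  rw [ContinuousLinearMap.smul_apply, norm_smul, h1]
  simp only [ContinuousLinearMap.coe_comp', Function.comp_apply, innerSL_apply_apply,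
    Complex.ofRealCLM_apply, Complex.norm_real]
  rw [mul_assoc]
  exact mul_le_mul_of_nonneg_left ((abs_real_inner_le_norm x v)) (norm_nonneg a)

lemma aux_cont {n : ℕ} (ξ : EuclideanSpace ℝ (Fin n)) :
    Continuous (fun x : EuclideanSpace ℝ (Fin n) => Complex.exp (Complex.I * ((inner ℝ x ξ : ℝ) : ℂ))) :=
  Complex.continuous_exp.comp ((continuous_const).mul
    (Complex.continuous_ofReal.comp (continuous_id.inner continuous_const)))

lemma aux_contCLM {n : ℕ} :
    Continuous (fun x : EuclideanSpace ℝ (Fin n) => Complex.ofRealCLM.comp (innerSL ℝ x)) := by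
  have : Continuous (fun x : EuclideanSpace ℝ (Fin n) => innerSL ℝ x) := (innerSL ℝ).continuous
  exact (ContinuousLinearMap.compL ℝ _ ℝ ℂ Complex.ofRealCLM).continuous.comp this

lemma aux_F'int {n : ℕ} (μ : Measure (EuclideanSpace ℝ (Fin n))) [IsFiniteMeasure μ]
    (u : EuclideanSpace ℝ (Fin n) → ℂ) (hu : MemLp u 2 μ) (R : ℝ)
    (hR : ∀ᵐ x ∂μ, ‖x‖ ≤ R) (ξ : EuclideanSpace ℝ (Fin n)) :
    Integrable (fun x => (u x * Complex.exp (Complex.I * ((inner ℝ x ξ : ℝ) : ℂ)) * Complex.I) •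
        (Complex.ofRealCLM.comp (innerSL ℝ x))) μ := by
  have huI : Integrable u μ :=
    memLp_one_iff_integrable.mp (hu.mono_exponent (by norm_num))
  refine Integrable.mono' (huI.norm.mul_const R) ?_ ?_
  · exact ((hu.1.mul (aux_cont ξ).aestronglyMeasurable).mul aestronglyMeasurable_const).smul
      aux_contCLM.aestronglyMeasurable
  · filter_upwards [hR] with x hx
    exact (aux_norm_smul x (u x) ξ).trans
      (mul_le_mul_of_nonneg_left hx (norm_nonneg _))

lemma aux_param {n : ℕ} (μ : Measure (EuclideanSpace ℝ (Fin n))) [IsFiniteMeasure μ]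
    (u : EuclideanSpace ℝ (Fin n) → ℂ) (hu : MemLp u 2 μ) (R : ℝ)
    (hR : ∀ᵐ x ∂μ, ‖x‖ ≤ R) (ξ : EuclideanSpace ℝ (Fin n)) :
    HasFDerivAt (fun ξ' => ∫ x, u x * Complex.exp (Complex.I * ((inner ℝ x ξ' : ℝ) : ℂ)) ∂μ)
      (∫ x, (u x * Complex.exp (Complex.I * ((inner ℝ x ξ : ℝ) : ℂ)) * Complex.I) •
        (Complex.ofRealCLM.comp (innerSL ℝ x)) ∂μ) ξ := by
  have huI : Integrable u μ :=
    memLp_one_iff_integrable.mp (hu.mono_exponent (by norm_num))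
  have hmeas : ∀ ξ' : EuclideanSpace ℝ (Fin n),
      AEStronglyMeasurable (fun x => u x * Complex.exp (Complex.I * ((inner ℝ x ξ' : ℝ) : ℂ))) μ :=
    fun ξ' => hu.1.mul (aux_cont ξ').aestronglyMeasurable
  refine hasFDerivAt_integral_of_dominated_of_fderiv_le
    (F' := fun ξ' x => (u x * Complex.exp (Complex.I * ((inner ℝ x ξ' : ℝ) : ℂ)) * Complex.I) •
        (Complex.ofRealCLM.comp (innerSL ℝ x)))
    (bound := fun x => ‖u x‖ * R) (Filter.univ_mem)
    (Filter.Eventually.of_forall hmeas) ?_ ?_ ?_ ?_ ?_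
  · refine Integrable.mono' huI.norm (hmeas ξ) ?_
    filter_upwards with x
    have he : ‖(Complex.exp (Complex.I * ((inner ℝ x ξ : ℝ) : ℂ)))‖ = 1 := by
      rw [mul_comm]; exact Complex.norm_exp_ofReal_mul_I _
    rw [norm_mul, he, mul_one]
  · exact ((hu.1.mul (aux_cont ξ).aestronglyMeasurable).mul aestronglyMeasurable_const).smul
      aux_contCLM.aestronglyMeasurable
  · filter_upwards [hR] with x hx ξ' _
    exact (aux_norm_smul x (u x) ξ').trans (mul_le_mul_of_nonneg_left hx (norm_nonneg _))
  · exact huI.norm.mul_const R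
  · filter_upwards with x ξ' _
    exact aux_hasFDeriv x (u x) ξ'

lemma aux_bessel {n k : ℕ} (μ : Measure (EuclideanSpace ℝ (Fin n)))
    (u : Fin k → EuclideanSpace ℝ (Fin n) → ℂ) (hu : ∀ j, MemLp (u j) 2 μ)
    (horth : ∀ i j, (∫ x, (starRingEnd ℂ) (u i x) * u j x ∂μ) = if i = j then 1 else 0)
    (g : EuclideanSpace ℝ (Fin n) → ℂ) (hg : MemLp g 2 μ) :
    ∑ j, ‖∫ x, (starRingEnd ℂ) (u j x) * g x ∂μ‖ ^ 2 ≤ ∫ x, ‖g x‖ ^ 2 ∂μ := by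
  set U : Fin k → Lp ℂ 2 μ := fun j => (hu j).toLp (u j) with hU
  set G : Lp ℂ 2 μ := hg.toLp g with hG
  have hinner : ∀ (j : Fin k) (w : Lp ℂ 2 μ) (wf : EuclideanSpace ℝ (Fin n) → ℂ)
      (hw : w =ᵐ[μ] wf), (inner ℂ (U j) w : ℂ) = ∫ x, (starRingEnd ℂ) (u j x) * wf x ∂μ := by
    intro j w wf hw
    rw [MeasureTheory.L2.inner_def]
    apply integral_congr_ae
    filter_upwards [(hu j).coeFn_toLp, hw] with x h1 h2
    rw [RCLike.inner_apply', h1, h2]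
  have hON : Orthonormal ℂ U := by
    rw [orthonormal_iff_ite]
    intro i j
    rw [hinner i (U j) (u j) (hu j).coeFn_toLp, horth i j]
  have hb := hON.sum_inner_products_le G (s := Finset.univ)
  have hGnorm : ‖G‖ ^ 2 = ∫ x, ‖g x‖ ^ 2 ∂μ := by
    rw [← inner_self_eq_norm_sq (𝕜 := ℂ) G, MeasureTheory.L2.inner_def]
    have : (∫ x, (inner ℂ (G x) (G x) : ℂ) ∂μ) = ∫ x, ((‖g x‖ ^ 2 : ℝ) : ℂ) ∂μ := by
      apply integral_congr_ae
      filter_upwards [hg.coeFn_toLp] with x h1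
      rw [RCLike.inner_apply', h1, Complex.conj_mul']
      norm_cast
    have h2 : (∫ x, ((‖g x‖ ^ 2 : ℝ) : ℂ) ∂μ) = ((∫ x, ‖g x‖ ^ 2 ∂μ : ℝ) : ℂ) := integral_ofReal
    rw [this, h2]
    exact RCLike.ofReal_re _
  rw [← hGnorm]
  refine le_trans (le_of_eq ?_) hb
  apply Finset.sum_congr rfl
  intro j _
  rw [hinner j G g hg.coeFn_toLp]

lemma aux_sq_deriv {n : ℕ} (φ : EuclideanSpace ℝ (Fin n) → ℂ)
    (D : EuclideanSpace ℝ (Fin n) →L[ℝ] ℂ) (ξ : EuclideanSpace ℝ (Fin n))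
    (hφ : HasFDerivAt φ D ξ) (c : ℝ) :
    HasFDerivAt (fun ξ' => c * ((φ ξ').re * (φ ξ').re + (φ ξ').im * (φ ξ').im))
      (c • ((2 * (φ ξ).re) • (Complex.reCLM.comp D) + (2 * (φ ξ).im) • (Complex.imCLM.comp D)))
      ξ := by
  have hre : HasFDerivAt (fun ξ' => (φ ξ').re) (Complex.reCLM.comp D) ξ :=
    (Complex.reCLM.hasFDerivAt.comp ξ hφ)
  have him : HasFDerivAt (fun ξ' => (φ ξ').im) (Complex.imCLM.comp D) ξ :=
    (Complex.imCLM.hasFDerivAt.comp ξ hφ)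
  have := ((hre.mul hre).add (him.mul him)).const_mul c
  refine this.congr_fderiv ?_
  ext v
  simp
  ring

lemma aux_scalar (c : ℝ) (hc : 0 ≤ c) (a b : ℂ) :
    |c * (2 * a.re * b.re + 2 * a.im * b.im)| ≤ c * (2 * (‖a‖ * ‖b‖)) := by
  have h : 2 * a.re * b.re + 2 * a.im * b.im = 2 * ((starRingEnd ℂ) a * b).re := by
    simp [Complex.mul_re]
    ring
  rw [abs_mul, _root_.abs_of_nonneg hc, h, abs_mul, show |(2:ℝ)| = 2 by norm_num]
  apply mul_le_mul_of_nonneg_left _ hc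
  apply mul_le_mul_of_nonneg_left _ (by norm_num)
  calc |((starRingEnd ℂ) a * b).re| ≤ ‖(starRingEnd ℂ) a * b‖ := Complex.abs_re_le_norm _
    _ = ‖a‖ * ‖b‖ := by rw [norm_mul, RCLike.norm_conj]

lemma aux_conj1 (a : ℂ) (t : ℝ) :
    (starRingEnd ℂ) a * Complex.exp (-(Complex.I * (t : ℂ))) =
      (starRingEnd ℂ) (a * Complex.exp (Complex.I * (t : ℂ))) := by
  rw [map_mul]
  congr 1
  rw [← Complex.exp_conj]
  congr 1
  simp [Complex.conj_I]

lemma aux_conj2 (a : ℂ) (t s : ℝ) :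
    (starRingEnd ℂ) a * (Complex.exp (-(Complex.I * (t : ℂ))) * (-Complex.I) * (s : ℂ)) =
      (starRingEnd ℂ) (a * Complex.exp (Complex.I * (t : ℂ)) * Complex.I * (s : ℂ)) := by
  rw [map_mul, map_mul, map_mul]
  rw [← Complex.exp_conj]
  simp [Complex.conj_I, Complex.conj_ofReal]
  ring

lemma aux_exp_norm (t : ℝ) : ‖Complex.exp (-(Complex.I * (t : ℂ)))‖ = 1 := by
  rw [show -(Complex.I * (t : ℂ)) = ((-t : ℝ) : ℂ) * Complex.I by push_cast; ring]
  exact Complex.norm_exp_ofReal_mul_I _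

theorem stmt19 (n k : ℕ) (Ω : Set (EuclideanSpace ℝ (Fin n)))
    (hmeas : MeasurableSet Ω) (hbdd : Bornology.IsBounded Ω)
    (u : Fin k → EuclideanSpace ℝ (Fin n) → ℂ)
    (hL2 : ∀ j, MemLp (u j) 2 volume)
    (hsupp : ∀ j, ∀ᵐ x ∂volume, x ∉ Ω → u j x = 0)
    (horth : ∀ i j, (∫ x, u i x * (starRingEnd ℂ) (u j x)) = if i = j then 1 else 0)
    (f : Fin k → EuclideanSpace ℝ (Fin n) → ℂ)
    (hf : ∀ j ξ, f j ξ = (((2 * Real.pi) ^ (-(n : ℝ) / 2) : ℝ) : ℂ) *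
        ∫ x in Ω, u j x * Complex.exp (Complex.I * ((inner ℝ x ξ : ℝ) : ℂ)))
    (F : EuclideanSpace ℝ (Fin n) → ℝ)
    (hF : ∀ ξ, F ξ = ∑ j, ‖f j ξ‖ ^ 2) :
    Differentiable ℝ F ∧ ∀ ξ, ‖gradient F ξ‖ ≤
      2 * (2 * Real.pi) ^ (-(n : ℝ)) *
        Real.sqrt ((volume Ω).toReal * ∫ x in Ω, ‖x‖ ^ 2) := by
  classical
  set μ : Measure (EuclideanSpace ℝ (Fin n)) := volume.restrict Ω with hμdef
  haveI : IsFiniteMeasure μ := ⟨by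
    rw [hμdef, Measure.restrict_apply_univ]; exact hbdd.measure_lt_top⟩
  obtain ⟨R0, hR0⟩ : ∃ C, ∀ x ∈ Ω, ‖x‖ ≤ C := hbdd.exists_norm_le
  set R := max R0 0 with hRdef
  have hRnn : (0:ℝ) ≤ R := le_max_right _ _
  have hRμ : ∀ᵐ x ∂μ, ‖x‖ ≤ R := by
    rw [hμdef]
    filter_upwards [ae_restrict_mem hmeas] with x hx
    exact le_trans (hR0 x hx) (le_max_left _ _)
  have huμ : ∀ j, MemLp (u j) 2 μ := fun j => (hL2 j).restrict Ω
  have horthμ : ∀ i j, (∫ x, (starRingEnd ℂ) (u i x) * u j x ∂μ) = if i = j then 1 else 0 := by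
    intro i j
    have h1 : (∫ x, u i x * (starRingEnd ℂ) (u j x) ∂μ)
        = ∫ x, u i x * (starRingEnd ℂ) (u j x) := by
      rw [hμdef]
      apply setIntegral_eq_integral_of_ae_compl_eq_zero
      filter_upwards [hsupp i] with x hx hxc
      rw [hx hxc, zero_mul]
    have h2 : (∫ x, (starRingEnd ℂ) (u i x) * u j x ∂μ)
        = (starRingEnd ℂ) (∫ x, u i x * (starRingEnd ℂ) (u j x) ∂μ) := by
      rw [← integral_conj]
      apply integral_congr_ae
      filter_upwards with x
      rw [map_mul, Complex.conj_conj]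
    rw [h2, h1, horth i j]
    split_ifs <;> simp
  set c : ℝ := (2 * Real.pi) ^ (-(n:ℝ)/2) with hcdef
  have hc : 0 < c := Real.rpow_pos_of_pos (by positivity) _
  have hc2 : c ^ 2 = (2 * Real.pi) ^ (-(n:ℝ)) := by
    rw [hcdef, ← Real.rpow_natCast ((2*Real.pi) ^ (-(n:ℝ)/2)) 2,
      ← Real.rpow_mul (by positivity)]
    norm_num
  have hV : (0:ℝ) ≤ (volume Ω).toReal := ENNReal.toReal_nonneg
  have hIq : (0:ℝ) ≤ ∫ x, ‖x‖ ^ 2 ∂μ := integral_nonneg fun x => sq_nonneg _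
  have hx2int : Integrable (fun x : EuclideanSpace ℝ (Fin n) => ‖x‖ ^ 2) μ := by
    refine Integrable.mono' (integrable_const (R ^ 2)) ?_ ?_
    · exact (continuous_norm.pow 2).aestronglyMeasurable
    · filter_upwards [hRμ] with x hx
      rw [Real.norm_eq_abs, _root_.abs_of_nonneg (sq_nonneg _)]
      exact pow_le_pow_left₀ (norm_nonneg _) hx 2
  have main : ∀ ξ, ∃ L : EuclideanSpace ℝ (Fin n) →L[ℝ] ℝ, HasFDerivAt F L ξ ∧
      ‖L‖ ≤ 2 * (2 * Real.pi) ^ (-(n:ℝ)) * Real.sqrt ((volume Ω).toReal * ∫ x, ‖x‖ ^ 2 ∂μ) := by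
    intro ξ
    set D : Fin k → (EuclideanSpace ℝ (Fin n) →L[ℝ] ℂ) := fun j =>
      ∫ x, (u j x * Complex.exp (Complex.I * ((inner ℝ x ξ : ℝ):ℂ)) * Complex.I) •
        (Complex.ofRealCLM.comp (innerSL ℝ x)) ∂μ with hDdef
    set φf : Fin k → EuclideanSpace ℝ (Fin n) → ℂ := fun j ξ' =>
      ∫ x, u j x * Complex.exp (Complex.I * ((inner ℝ x ξ' : ℝ):ℂ)) ∂μ with hφdef
    have hder : ∀ j, HasFDerivAt (φf j) (D j) ξ :=
      fun j => aux_param μ (u j) (huμ j) R hRμ ξ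
    set L : EuclideanSpace ℝ (Fin n) →L[ℝ] ℝ := ∑ j, (c ^ 2) •
      ((2 * (φf j ξ).re) • (Complex.reCLM.comp (D j)) +
        (2 * (φf j ξ).im) • (Complex.imCLM.comp (D j))) with hLdef
    have hnormsq : ∀ z : ℂ, ‖z‖ ^ 2 = z.re * z.re + z.im * z.im := fun z => by
      rw [Complex.sq_norm, Complex.normSq_apply]
    have hFeq : F = fun ξ' => ∑ j, c ^ 2 *
        ((φf j ξ').re * (φf j ξ').re + (φf j ξ').im * (φf j ξ').im) := by
      funext ξ'
      rw [hF]
      apply Finset.sum_congr rfl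
      intro j _
      rw [hf j ξ', norm_mul, mul_pow, ← hnormsq, Complex.norm_real, Real.norm_eq_abs,
        _root_.abs_of_pos hc]
    have hFder : HasFDerivAt F L ξ := by
      rw [hFeq, hLdef]
      exact HasFDerivAt.fun_sum (fun j _ => aux_sq_deriv (φf j) (D j) ξ (hder j) (c ^ 2))
    refine ⟨L, hFder, ContinuousLinearMap.opNorm_le_bound _ (by positivity) fun v => ?_⟩
    -- Bessel 1
    have hg1 : MemLp (fun x : EuclideanSpace ℝ (Fin n) =>
        Complex.exp (-(Complex.I * ((inner ℝ x ξ : ℝ):ℂ)))) 2 μ := by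
      refine MemLp.of_bound ?_ 1 ?_
      · exact (Complex.continuous_exp.comp ((continuous_const.mul
          (Complex.continuous_ofReal.comp
            (continuous_id.inner continuous_const))).neg)).aestronglyMeasurable
      · filter_upwards with x
        rw [aux_exp_norm]
    have heq1 : ∀ j : Fin k, (∫ x, (starRingEnd ℂ) (u j x) *
        Complex.exp (-(Complex.I * ((inner ℝ x ξ : ℝ):ℂ))) ∂μ) = (starRingEnd ℂ) (φf j ξ) := by
      intro j
      rw [hφdef, ← integral_conj]
      exact integral_congr_ae (Filter.Eventually.of_forall fun x => aux_conj1 _ _)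
    have hB1 : ∑ j, ‖φf j ξ‖ ^ 2 ≤ (volume Ω).toReal := by
      calc ∑ j, ‖φf j ξ‖ ^ 2
          = ∑ j, ‖∫ x, (starRingEnd ℂ) (u j x) *
              Complex.exp (-(Complex.I * ((inner ℝ x ξ : ℝ):ℂ))) ∂μ‖ ^ 2 := by
            refine Finset.sum_congr rfl fun j _ => ?_
            rw [heq1 j, RCLike.norm_conj]
        _ ≤ ∫ x, ‖Complex.exp (-(Complex.I * ((inner ℝ x ξ : ℝ):ℂ)))‖ ^ 2 ∂μ :=
            aux_bessel μ u huμ horthμ _ hg1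
        _ = (volume Ω).toReal := by
            rw [show (fun x : EuclideanSpace ℝ (Fin n) =>
                ‖Complex.exp (-(Complex.I * ((inner ℝ x ξ : ℝ):ℂ)))‖ ^ 2) = fun _ => (1:ℝ) from
              funext fun x => by rw [aux_exp_norm]; norm_num]
            rw [integral_const, smul_eq_mul, mul_one, hμdef, measureReal_restrict_apply_univ, Measure.real]
    -- Bessel 2
    have hDv : ∀ j, D j v = ∫ x, (u j x * Complex.exp (Complex.I * ((inner ℝ x ξ : ℝ):ℂ)) *
        Complex.I) * ((inner ℝ x v : ℝ):ℂ) ∂μ := by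
      intro j
      rw [hDdef, ContinuousLinearMap.integral_apply (aux_F'int μ (u j) (huμ j) R hRμ ξ) v]
      refine integral_congr_ae (Filter.Eventually.of_forall fun x => ?_)
      simp
    have hg2 : MemLp (fun x : EuclideanSpace ℝ (Fin n) =>
        Complex.exp (-(Complex.I * ((inner ℝ x ξ : ℝ):ℂ))) * (-Complex.I) *
          ((inner ℝ x v : ℝ):ℂ)) 2 μ := by
      refine MemLp.of_bound ?_ (R * ‖v‖) ?_
      · refine (((Complex.continuous_exp.comp ((continuous_const.mul
          (Complex.continuous_ofReal.comp (continuous_id.inner continuous_const))).neg)).mul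
            continuous_const).mul (Complex.continuous_ofReal.comp
              (continuous_id.inner continuous_const))).aestronglyMeasurable
      · filter_upwards [hRμ] with x hx
        simp only [norm_mul, aux_exp_norm, norm_neg, Complex.norm_I, one_mul, mul_one,
          Complex.norm_real, Real.norm_eq_abs]
        exact le_trans (abs_real_inner_le_norm x v)
          (mul_le_mul_of_nonneg_right hx (norm_nonneg v))
    have heq2 : ∀ j : Fin k, (∫ x, (starRingEnd ℂ) (u j x) *
        (Complex.exp (-(Complex.I * ((inner ℝ x ξ : ℝ):ℂ))) * (-Complex.I) *
          ((inner ℝ x v : ℝ):ℂ)) ∂μ) = (starRingEnd ℂ) (D j v) := by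
      intro j
      rw [hDv j, ← integral_conj]
      exact integral_congr_ae (Filter.Eventually.of_forall fun x => aux_conj2 _ _ _)
    have hptinner : ∀ x : EuclideanSpace ℝ (Fin n),
        (inner ℝ x v : ℝ) ^ 2 ≤ ‖x‖ ^ 2 * ‖v‖ ^ 2 := by
      intro x
      rw [← _root_.sq_abs, ← mul_pow]
      exact pow_le_pow_left₀ (abs_nonneg _) (abs_real_inner_le_norm x v) 2
    have hint1 : Integrable (fun x : EuclideanSpace ℝ (Fin n) => (inner ℝ x v : ℝ) ^ 2) μ := by
      refine Integrable.mono' (hx2int.mul_const (‖v‖ ^ 2)) ?_ ?_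
      · exact (((continuous_id.inner continuous_const)).pow 2).aestronglyMeasurable
      · filter_upwards with x
        rw [Real.norm_eq_abs, _root_.abs_of_nonneg (sq_nonneg _)]
        exact hptinner x
    have hB2 : ∑ j, ‖D j v‖ ^ 2 ≤ (∫ x, ‖x‖ ^ 2 ∂μ) * ‖v‖ ^ 2 := by
      calc ∑ j, ‖D j v‖ ^ 2
          = ∑ j, ‖∫ x, (starRingEnd ℂ) (u j x) *
              (Complex.exp (-(Complex.I * ((inner ℝ x ξ : ℝ):ℂ))) * (-Complex.I) *
                ((inner ℝ x v : ℝ):ℂ)) ∂μ‖ ^ 2 := by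
            refine Finset.sum_congr rfl fun j _ => ?_
            rw [heq2 j, RCLike.norm_conj]
        _ ≤ ∫ x, ‖Complex.exp (-(Complex.I * ((inner ℝ x ξ : ℝ):ℂ))) * (-Complex.I) *
              ((inner ℝ x v : ℝ):ℂ)‖ ^ 2 ∂μ := aux_bessel μ u huμ horthμ _ hg2
        _ = ∫ x, (inner ℝ x v : ℝ) ^ 2 ∂μ := by
            refine integral_congr_ae (Filter.Eventually.of_forall fun x => ?_)
            dsimp only
            simp only [norm_mul, aux_exp_norm, norm_neg, Complex.norm_I, one_mul, mul_one,
              Complex.norm_real, Real.norm_eq_abs]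
            rw [_root_.sq_abs]
        _ ≤ ∫ x, ‖x‖ ^ 2 * ‖v‖ ^ 2 ∂μ :=
            integral_mono_ae hint1 (hx2int.mul_const _)
              (Filter.Eventually.of_forall hptinner)
        _ = (∫ x, ‖x‖ ^ 2 ∂μ) * ‖v‖ ^ 2 := integral_mul_const _ _
    -- evaluate L v
    have hLv : L v = ∑ j, c ^ 2 *
        (2 * (φf j ξ).re * (D j v).re + 2 * (φf j ξ).im * (D j v).im) := by
      rw [hLdef, ContinuousLinearMap.sum_apply]
      refine Finset.sum_congr rfl fun j _ => ?_
      simp [smul_eq_mul]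
      ring
    calc ‖L v‖ = |∑ j, c ^ 2 *
          (2 * (φf j ξ).re * (D j v).re + 2 * (φf j ξ).im * (D j v).im)| := by
          rw [hLv, Real.norm_eq_abs]
      _ ≤ ∑ j, |c ^ 2 *
          (2 * (φf j ξ).re * (D j v).re + 2 * (φf j ξ).im * (D j v).im)| :=
          Finset.abs_sum_le_sum_abs _ _
      _ ≤ ∑ j, c ^ 2 * (2 * (‖φf j ξ‖ * ‖D j v‖)) :=
          Finset.sum_le_sum fun j _ => aux_scalar (c ^ 2) (sq_nonneg c) _ _
      _ = 2 * c ^ 2 * ∑ j, ‖φf j ξ‖ * ‖D j v‖ := by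
          rw [Finset.mul_sum]
          exact Finset.sum_congr rfl fun j _ => by ring
      _ ≤ 2 * c ^ 2 * (Real.sqrt (∑ j, ‖φf j ξ‖ ^ 2) * Real.sqrt (∑ j, ‖D j v‖ ^ 2)) := by
          apply mul_le_mul_of_nonneg_left _ (by positivity)
          rw [← Real.sqrt_mul (Finset.sum_nonneg fun j _ => sq_nonneg _)]
          exact Real.le_sqrt_of_sq_le
            (Finset.sum_mul_sq_le_sq_mul_sq Finset.univ (fun j => ‖φf j ξ‖) (fun j => ‖D j v‖))
      _ ≤ 2 * c ^ 2 * (Real.sqrt ((volume Ω).toReal) *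
            Real.sqrt ((∫ x, ‖x‖ ^ 2 ∂μ) * ‖v‖ ^ 2)) := by
          apply mul_le_mul_of_nonneg_left _ (by positivity)
          exact mul_le_mul (Real.sqrt_le_sqrt hB1) (Real.sqrt_le_sqrt hB2)
            (Real.sqrt_nonneg _) (Real.sqrt_nonneg _)
      _ = 2 * (2 * Real.pi) ^ (-(n:ℝ)) *
            Real.sqrt ((volume Ω).toReal * ∫ x, ‖x‖ ^ 2 ∂μ) * ‖v‖ := by
          rw [Real.sqrt_mul hIq, Real.sqrt_sq (norm_nonneg v), Real.sqrt_mul hV, hc2]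
          ring
  constructor
  · intro ξ
    obtain ⟨L, hL, _⟩ := main ξ
    exact hL.differentiableAt
  · intro ξ
    obtain ⟨L, hL, hLb⟩ := main ξ
    have hgrad : gradient F ξ =
        (InnerProductSpace.toDual ℝ (EuclideanSpace ℝ (Fin n))).symm (fderiv ℝ F ξ) := rfl
    rw [hgrad, hL.fderiv, LinearIsometryEquiv.norm_map]
    exact hLb
end
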